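/- arXiv:1705.05006 — 7 statements merged into one kernel-verified Lean document; each statement's English description precedes it below -/
import Mathlib

section
/- For every probability mass function p on ℕ and all integers i ≥ 1 and n ≥ 0, the sum ∑_{u∈ℕ} p(u)^i (1−p(u))^n is at most (i−1)!·n!/(n+i−1)!. -/
open scoped BigOperators

lemma aux_pointwise (x : ℝ) (hx0 : 0 ≤ x) (hx1 : x ≤ 1) (a b : ℕ) :
    x ^ a * (1 - x) ^ b ≤
      (Nat.factorial a : ℝ) * (Nat.factorial b : ℝ) / (Nat.factorial (a + b) : ℝ) := by
  have hy : (0:ℝ) ≤ 1 - x := by linarith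
  have hexp : ∑ k ∈ Finset.range (a + b + 1),
      x ^ k * (1 - x) ^ (a + b - k) * ((a + b).choose k : ℝ) = 1 := by
    have := add_pow x (1 - x) (a + b)
    simp only [add_sub_cancel, one_pow] at this
    exact this.symm
  have hterm : x ^ a * (1 - x) ^ b * ((a + b).choose a : ℝ) ≤ 1 := by
    have hmem : a ∈ Finset.range (a + b + 1) := by
      simp
    have hb := Finset.single_le_sum
      (f := fun k => x ^ k * (1 - x) ^ (a + b - k) * ((a + b).choose k : ℝ))
      (fun k _ => by positivity) hmem
    rw [hexp] at hb
    simpa [Nat.add_sub_cancel_left] using hb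
  have hC : ((a + b).choose a : ℝ) * ((Nat.factorial a : ℝ) * (Nat.factorial b : ℝ))
      = (Nat.factorial (a + b) : ℝ) := by
    have := Nat.choose_mul_factorial_mul_factorial (Nat.le_add_right a b)
    have h2 : (a + b) - a = b := by omega
    rw [h2] at this
    exact_mod_cast by rw [← this]; ring
  have hCpos : (0:ℝ) < ((a + b).choose a : ℝ) := by
    exact_mod_cast Nat.choose_pos (Nat.le_add_right a b)
  rw [le_div_iff₀ (by positivity)]
  calc x ^ a * (1 - x) ^ b * (Nat.factorial (a + b) : ℝ)
      = (x ^ a * (1 - x) ^ b * ((a + b).choose a : ℝ)) *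
        ((Nat.factorial a : ℝ) * (Nat.factorial b : ℝ)) := by rw [← hC]; ring
    _ ≤ 1 * ((Nat.factorial a : ℝ) * (Nat.factorial b : ℝ)) := by
        apply mul_le_mul_of_nonneg_right hterm (by positivity)
    _ = (Nat.factorial a : ℝ) * (Nat.factorial b : ℝ) := one_mul _

/-- **Lemma (univariate moment bound).**
For every probability mass function `p` on `ℕ` and all integers `i ≥ 1`, `n ≥ 0`,
`∑_{u ∈ ℕ} p(u)^i (1 - p(u))^n ≤ (i-1)! n! / (n+i-1)!`. -/
theorem missing_mass_univariate_moment_bound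
    (p : ℕ → ℝ) (hp_nonneg : ∀ u, 0 ≤ p u) (hp_sum : HasSum p 1)
    (i n : ℕ) (hi : 1 ≤ i) :
    ∑' u : ℕ, p u ^ i * (1 - p u) ^ n ≤
      (Nat.factorial (i - 1) : ℝ) * (Nat.factorial n : ℝ) /
        (Nat.factorial (n + i - 1) : ℝ) := by
  set a := i - 1 with ha
  have hia : i = a + 1 := by omega
  have hni : n + i - 1 = a + n := by omega
  set M : ℝ := (Nat.factorial a : ℝ) * (Nat.factorial n : ℝ) / (Nat.factorial (a + n) : ℝ)
    with hM
  have hMnonneg : 0 ≤ M := by positivity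
  have hple : ∀ u, p u ≤ 1 := fun u =>
    le_hasSum hp_sum u (fun j _ => hp_nonneg j)
  have hle : ∀ u, p u ^ i * (1 - p u) ^ n ≤ p u * M := by
    intro u
    have h1 := aux_pointwise (p u) (hp_nonneg u) (hple u) a n
    calc p u ^ i * (1 - p u) ^ n = p u * (p u ^ a * (1 - p u) ^ n) := by
          rw [hia]; ring
      _ ≤ p u * M := mul_le_mul_of_nonneg_left h1 (hp_nonneg u)
  have hnonneg : ∀ u, 0 ≤ p u ^ i * (1 - p u) ^ n := by
    intro u
    have h1 : 0 ≤ 1 - p u := by linarith [hple u]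
    have h2 := hp_nonneg u
    positivity
  have hsumM : HasSum (fun u => p u * M) M := by
    simpa using hp_sum.mul_right M
  have hsummable : Summable (fun u => p u ^ i * (1 - p u) ^ n) :=
    Summable.of_nonneg_of_le hnonneg hle hsumM.summable
  calc ∑' u : ℕ, p u ^ i * (1 - p u) ^ n
      ≤ ∑' u : ℕ, p u * M := Summable.tsum_le_tsum hle hsummable hsumM.summable
    _ = M := hsumM.tsum_eq
    _ = (Nat.factorial (i - 1) : ℝ) * (Nat.factorial n : ℝ) /
        (Nat.factorial (n + i - 1) : ℝ) := by rw [hM, hni]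
end

section
/- For every probability mass function p on ℕ and all integers i ≥ 1, j ≥ 1 and n ≥ 0, the sum over all ordered pairs of distinct symbols ∑_{u,v∈ℕ, u≠v} p(u)^i p(v)^j (1−p(u)−p(v))^n is at most (i−1)!·(j−1)!·n!/(n+i+j−2)!. -/
open scoped BigOperators

private lemma aux_binom_term_le (x y : ℝ) (hx : 0 ≤ x) (hy : 0 ≤ y) (a m : ℕ) (h : a ≤ m) :
    (m.choose a : ℝ) * (x ^ a * y ^ (m - a)) ≤ (x + y) ^ m := by
  rw [add_pow]
  have hmem : a ∈ Finset.range (m + 1) := Finset.mem_range.mpr (Nat.lt_succ_of_le h)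
  have := Finset.single_le_sum
    (f := fun k => x ^ k * y ^ (m - k) * (m.choose k : ℝ))
    (fun k _ => by positivity) hmem
  calc (m.choose a : ℝ) * (x ^ a * y ^ (m - a))
      = x ^ a * y ^ (m - a) * (m.choose a : ℝ) := by ring
    _ ≤ _ := this

private lemma aux_tri_term_le (x y z : ℝ) (hx : 0 ≤ x) (hy : 0 ≤ y) (hz : 0 ≤ z)
    (a b n : ℕ) :
    (((n + a + b).choose (a + b) : ℝ) * ((a + b).choose a : ℝ)) * (x ^ a * y ^ b * z ^ n)
      ≤ (x + y + z) ^ (n + a + b) := by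
  have h1 : ((a + b).choose a : ℝ) * (x ^ a * y ^ b) ≤ (x + y) ^ (a + b) := by
    have := aux_binom_term_le x y hx hy a (a + b) (Nat.le_add_right a b)
    simpa using this
  have h2 : (((n + a + b).choose (a + b) : ℝ)) * ((x + y) ^ (a + b) * z ^ n)
      ≤ (x + y + z) ^ (n + a + b) := by
    have := aux_binom_term_le (x + y) z (by linarith) hz (a + b) (n + a + b) (by omega)
    have hsub : n + a + b - (a + b) = n := by omega
    rwa [hsub] at this
  have hC1 : (0:ℝ) ≤ ((n + a + b).choose (a + b) : ℝ) := by positivity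
  calc (((n + a + b).choose (a + b) : ℝ) * ((a + b).choose a : ℝ)) * (x ^ a * y ^ b * z ^ n)
      = (((n + a + b).choose (a + b) : ℝ)) * ((((a + b).choose a : ℝ)) * (x ^ a * y ^ b) * z ^ n) := by
        ring
    _ ≤ (((n + a + b).choose (a + b) : ℝ)) * ((x + y) ^ (a + b) * z ^ n) := by
        apply mul_le_mul_of_nonneg_left _ hC1
        exact mul_le_mul_of_nonneg_right h1 (by positivity)
    _ ≤ _ := h2

/-- **Lemma (bivariate moment bound).**
For every probability mass function `p` on `ℕ` and all integers `i ≥ 1`, `j ≥ 1`, `n ≥ 0`,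
the sum over ordered pairs of distinct symbols
`∑_{u ≠ v} p(u)^i p(v)^j (1 - p(u) - p(v))^n ≤ (i-1)! (j-1)! n! / (n+i+j-2)!`. -/
theorem missing_mass_bivariate_moment_bound
    (p : ℕ → ℝ) (hp_nonneg : ∀ u, 0 ≤ p u) (hp_sum : HasSum p 1)
    (i j n : ℕ) (hi : 1 ≤ i) (hj : 1 ≤ j) :
    (∑' u : ℕ, ∑' v : ℕ,
        if u ≠ v then p u ^ i * p v ^ j * (1 - p u - p v) ^ n else 0) ≤
      (Nat.factorial (i - 1) : ℝ) * (Nat.factorial (j - 1) : ℝ) *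
        (Nat.factorial n : ℝ) / (Nat.factorial (n + i + j - 2) : ℝ) := by
  obtain ⟨a, rfl⟩ : ∃ a, i = a + 1 := ⟨i - 1, by omega⟩
  obtain ⟨b, rfl⟩ : ∃ b, j = b + 1 := ⟨j - 1, by omega⟩
  have hidx1 : a + 1 - 1 = a := by omega
  have hidx2 : b + 1 - 1 = b := by omega
  have hidx3 : n + (a + 1) + (b + 1) - 2 = n + a + b := by omega
  rw [hidx1, hidx2, hidx3]
  set N := n + a + b with hN
  set B : ℝ := (Nat.factorial a : ℝ) * (Nat.factorial b : ℝ) *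
      (Nat.factorial n : ℝ) / (Nat.factorial N : ℝ) with hB
  have hBnonneg : 0 ≤ B := by positivity
  -- the multinomial coefficient
  set C : ℕ := N.choose (a + b) * (a + b).choose a with hC
  have hCfact : C * (Nat.factorial a * Nat.factorial b * Nat.factorial n) = Nat.factorial N := by
    have h1 : (a + b).choose a * Nat.factorial a * Nat.factorial b = Nat.factorial (a + b) := by
      have := Nat.choose_mul_factorial_mul_factorial (Nat.le_add_right a b)
      simpa using this
    have h2 : N.choose (a + b) * Nat.factorial (a + b) * Nat.factorial n = Nat.factorial N := by
      have hle : a + b ≤ N := by omega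
      have := Nat.choose_mul_factorial_mul_factorial hle
      have hsub : N - (a + b) = n := by omega
      rwa [hsub] at this
    calc C * (Nat.factorial a * Nat.factorial b * Nat.factorial n)
        = N.choose (a + b) * ((a + b).choose a * Nat.factorial a * Nat.factorial b)
            * Nat.factorial n := by rw [hC]; ring
      _ = N.choose (a + b) * Nat.factorial (a + b) * Nat.factorial n := by rw [h1]
      _ = Nat.factorial N := h2
  have hCpos : 0 < C := by
    apply Nat.mul_pos
    · exact Nat.choose_pos (by omega)
    · exact Nat.choose_pos (Nat.le_add_right a b)
  -- key: 1/C = B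
  have hBC : B = 1 / (C : ℝ) := by
    rw [hB, div_eq_div_iff (by positivity) (Nat.cast_pos.mpr hCpos).ne' ]
    push_cast [← hCfact]
    ring
  -- pointwise bound
  have hpoint : ∀ u v : ℕ,
      (if u ≠ v then p u ^ (a + 1) * p v ^ (b + 1) * (1 - p u - p v) ^ n else 0)
        ≤ p u * p v * B := by
    intro u v
    by_cases huv : u ≠ v
    · rw [if_pos huv]
      have hsum2 : p u + p v ≤ 1 := by
        have : ∑ w ∈ ({u, v} : Finset ℕ), p w ≤ 1 :=
          sum_le_hasSum _ (fun w _ => hp_nonneg w) hp_sum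
        rwa [Finset.sum_pair huv] at this
      have hz : 0 ≤ 1 - p u - p v := by linarith
      have hkey := aux_tri_term_le (p u) (p v) (1 - p u - p v)
        (hp_nonneg u) (hp_nonneg v) hz a b n
      have heq1 : p u + p v + (1 - p u - p v) = 1 := by ring
      rw [heq1, one_pow] at hkey
      have hkey' : p u ^ a * p v ^ b * (1 - p u - p v) ^ n ≤ B := by
        rw [hBC, le_div_iff₀ (by exact_mod_cast hCpos)]
        calc p u ^ a * p v ^ b * (1 - p u - p v) ^ n * (C : ℝ)
            = ((N.choose (a + b) : ℝ) * ((a + b).choose a : ℝ))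
                * (p u ^ a * p v ^ b * (1 - p u - p v) ^ n) := by
              rw [hC]; push_cast; ring
          _ ≤ 1 := hkey
      calc p u ^ (a + 1) * p v ^ (b + 1) * (1 - p u - p v) ^ n
          = (p u * p v) * (p u ^ a * p v ^ b * (1 - p u - p v) ^ n) := by ring
        _ ≤ (p u * p v) * B := by
            exact mul_le_mul_of_nonneg_left hkey' (mul_nonneg (hp_nonneg u) (hp_nonneg v))
        _ = p u * p v * B := rfl
    · rw [if_neg huv]
      have := hp_nonneg u
      have := hp_nonneg v
      positivity
  -- summability facts
  have hpsum : Summable p := hp_sum.summable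
  have hsumv : ∀ u, Summable (fun v => p u * p v * B) := by
    intro u
    exact (hpsum.mul_left (p u)).mul_right B
  have hFnonneg : ∀ u v : ℕ, 0 ≤
      (if u ≠ v then p u ^ (a + 1) * p v ^ (b + 1) * (1 - p u - p v) ^ n else 0) := by
    intro u v
    by_cases huv : u ≠ v
    · rw [if_pos huv]
      by_cases hle : p u + p v ≤ 1
      · have : 0 ≤ 1 - p u - p v := by linarith
        have := hp_nonneg u
        have := hp_nonneg v
        positivity
      · exfalso
        apply hle
        have : ∑ w ∈ ({u, v} : Finset ℕ), p w ≤ 1 :=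
          sum_le_hasSum _ (fun w _ => hp_nonneg w) hp_sum
        rwa [Finset.sum_pair huv] at this
    · rw [if_neg huv]
  have hFsummable : ∀ u, Summable (fun v =>
      (if u ≠ v then p u ^ (a + 1) * p v ^ (b + 1) * (1 - p u - p v) ^ n else 0)) := by
    intro u
    exact Summable.of_nonneg_of_le (hFnonneg u) (hpoint u) (hsumv u)
  have hinner : ∀ u, (∑' v, (if u ≠ v then p u ^ (a + 1) * p v ^ (b + 1)
      * (1 - p u - p v) ^ n else 0)) ≤ p u * B := by
    intro u
    have h1 : (∑' v, (if u ≠ v then p u ^ (a + 1) * p v ^ (b + 1)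
        * (1 - p u - p v) ^ n else 0)) ≤ ∑' v, p u * p v * B :=
      Summable.tsum_le_tsum (hpoint u) (hFsummable u) (hsumv u)
    have h2 : (∑' v, p u * p v * B) = p u * B := by
      have : (fun v => p u * p v * B) = (fun v => (p u * B) * p v) := by
        funext v; ring
      rw [this, tsum_mul_left, hp_sum.tsum_eq, mul_one]
    linarith [h1, h2.le]
  have houter_summable : Summable (fun u => ∑' v,
      (if u ≠ v then p u ^ (a + 1) * p v ^ (b + 1) * (1 - p u - p v) ^ n else 0)) := by
    apply Summable.of_nonneg_of_le
      (fun u => tsum_nonneg (hFnonneg u)) hinner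
    exact hpsum.mul_right B
  calc (∑' u : ℕ, ∑' v : ℕ,
        if u ≠ v then p u ^ (a + 1) * p v ^ (b + 1) * (1 - p u - p v) ^ n else 0)
      ≤ ∑' u, p u * B := Summable.tsum_le_tsum hinner houter_summable (hpsum.mul_right B)
    _ = B := by rw [tsum_mul_right, hp_sum.tsum_eq, one_mul]
end

section
/- For every probability mass function p on ℕ and every integer n ≥ 2, the risk of the Good-Turing estimator satisfies the exact identity R_n(M^GT, p) = (1/n)·∑_{u,v∈ℕ, u≠v} p(u)p(v)(1−p(u)−p(v))^{n−2}·[n·(p(u)+p(v))² − 1] + (1/n)·∑_{u∈ℕ} [p(u)(1−p(u))^{n−1} + n·p(u)²(1−p(u))^n]. -/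
open scoped BigOperators ENNReal

noncomputable section

/-- `p` is a probability mass function on `ℕ`. -/
def IsPMF (p : ℕ → ℝ) : Prop := (∀ u, 0 ≤ p u) ∧ HasSum p 1

/-- `N_u(X^n)`: the number of appearances of the symbol `u` in the sample `x`. -/
def nOcc {n : ℕ} (x : Fin n → ℕ) (u : ℕ) : ℕ :=
  (Finset.univ.filter fun i => x i = u).card

/-- Probability of the sample `x` under the `n`-fold product measure `p^⊗n`. -/
def sampleProb {n : ℕ} (p : ℕ → ℝ) (x : Fin n → ℕ) : ℝ := ∏ i, p (x i)

/-- Expectation of `f(X^n)` for `X^n ∼ p^⊗n`. -/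
def expct (n : ℕ) (p : ℕ → ℝ) (f : (Fin n → ℕ) → ℝ) : ℝ :=
  ∑' x : Fin n → ℕ, sampleProb p x * f x

/-- The missing mass `M₀(X^n) = ∑_u p(u) 𝟙[N_u(X^n) = 0]`. -/
def missingMass {n : ℕ} (p : ℕ → ℝ) (x : Fin n → ℕ) : ℝ :=
  ∑' u : ℕ, if nOcc x u = 0 then p u else 0

/-- `Φ_i(X^n)`: the number of symbols appearing exactly `i` times in `x` (for `i ≥ 1`). -/
def phi {n : ℕ} (i : ℕ) (x : Fin n → ℕ) : ℕ :=
  ((Finset.univ.image x).filter fun u => nOcc x u = i).card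

/-- The Good-Turing estimator `M^GT(X^n) = Φ₁(X^n)/n`. -/
def goodTuring {n : ℕ} (x : Fin n → ℕ) : ℝ := (phi 1 x : ℝ) / n

/-- The squared-error risk `R_n(M̂, p) = E[(M̂(X^n) - M₀(X^n))²]`. -/
def risk (n : ℕ) (p : ℕ → ℝ) (M : (Fin n → ℕ) → ℝ) : ℝ :=
  expct n p fun x => (M x - missingMass p x) ^ 2

/-- The worst-case risk of the Good-Turing estimator, `sup_p R_n(M^GT, p)`. -/
def gtWorstRisk (n : ℕ) : ℝ :=
  sSup {r : ℝ | ∃ p : ℕ → ℝ, IsPMF p ∧ r = risk n p goodTuring}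

section GTAux

open scoped ENNReal


/-- Product formula: tsum over `Fin m → ℕ` of a product factorizes. -/
lemma gt_tsum_pi_prod : ∀ (m : ℕ) (g : Fin m → ℕ → ℝ≥0∞),
    ∑' x : Fin m → ℕ, ∏ i, g i (x i) = ∏ i, ∑' w, g i w := by
  intro m
  induction m with
  | zero =>
      intro g
      simp only [Finset.univ_eq_empty, Finset.prod_empty]
      haveI : Unique (Fin 0 → ℕ) := ⟨⟨fun i => i.elim0⟩, fun x => funext fun i => i.elim0⟩
      rw [tsum_eq_single (default : Fin 0 → ℕ) (fun b hb => absurd (Subsingleton.elim b _) hb)]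
  | succ m ih =>
      intro g
      rw [← (Fin.consEquiv (fun _ : Fin (m+1) => ℕ)).tsum_eq]
      have hterm : ∀ bw : ℕ × (Fin m → ℕ),
          (∏ i, g i ((Fin.consEquiv (fun _ : Fin (m+1) => ℕ)) bw i))
            = g 0 bw.1 * ∏ i : Fin m, g i.succ (bw.2 i) := by
        rintro ⟨b, y⟩
        rw [Fin.prod_univ_succ]
        simp [Fin.consEquiv]
      calc ∑' bw : ℕ × (Fin m → ℕ), ∏ i, g i ((Fin.consEquiv (fun _ : Fin (m+1) => ℕ)) bw i)
          = ∑' bw : ℕ × (Fin m → ℕ), g 0 bw.1 * ∏ i : Fin m, g i.succ (bw.2 i) :=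
            tsum_congr hterm
        _ = ∑' b : ℕ, ∑' y : Fin m → ℕ, g 0 b * ∏ i : Fin m, g i.succ (y i) :=
            ENNReal.tsum_prod (f := fun (b : ℕ) (y : Fin m → ℕ) =>
              g 0 b * ∏ i : Fin m, g i.succ (y i))
        _ = ∑' b : ℕ, g 0 b * ∑' y : Fin m → ℕ, ∏ i : Fin m, g i.succ (y i) :=
            tsum_congr fun b => ENNReal.tsum_mul_left
        _ = (∑' b : ℕ, g 0 b) * ∑' y : Fin m → ℕ, ∏ i : Fin m, g i.succ (y i) :=
            ENNReal.tsum_mul_right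
        _ = ∏ i, ∑' w, g i w := by
            rw [ih (fun i w => g i.succ w), Fin.prod_univ_succ]

/-- Product with one special position. -/
lemma gt_prod_one_special {m : ℕ} (i : Fin m) (A C : ℝ≥0∞) :
    (∏ j : Fin m, if j = i then A else C) = A * C ^ (m - 1) := by
  rw [← Finset.mul_prod_erase Finset.univ _ (Finset.mem_univ i)]
  have h1 : (∏ j ∈ Finset.univ.erase i, if j = i then A else C)
      = ∏ _j ∈ Finset.univ.erase i, C :=
    Finset.prod_congr rfl (fun j hj => if_neg (Finset.ne_of_mem_erase hj))
  rw [h1, Finset.prod_const,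
    Finset.card_erase_of_mem (Finset.mem_univ i), Finset.card_univ, Fintype.card_fin]
  simp

/-- Product with two special positions. -/
lemma gt_prod_two_special {m : ℕ} {i k : Fin m} (hik : i ≠ k) (A B C : ℝ≥0∞) :
    (∏ j : Fin m, if j = i then A else if j = k then B else C) = A * B * C ^ (m - 2) := by
  rw [← Finset.mul_prod_erase Finset.univ _ (Finset.mem_univ i)]
  rw [← Finset.mul_prod_erase (Finset.univ.erase i) _
      (Finset.mem_erase.mpr ⟨hik.symm, Finset.mem_univ k⟩)]
  have h1 : (∏ j ∈ (Finset.univ.erase i).erase k,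
        if j = i then A else if j = k then B else C)
      = ∏ _j ∈ (Finset.univ.erase i).erase k, C :=
    Finset.prod_congr rfl (fun j hj => by
      have hj1 : j ≠ k := Finset.ne_of_mem_erase hj
      have hj2 : j ≠ i := Finset.ne_of_mem_erase (Finset.mem_of_mem_erase hj)
      rw [if_neg hj2, if_neg hj1])
  rw [h1, Finset.prod_const,
    Finset.card_erase_of_mem (Finset.mem_erase.mpr ⟨hik.symm, Finset.mem_univ k⟩),
    Finset.card_erase_of_mem (Finset.mem_univ i), Finset.card_univ, Fintype.card_fin]
  have hm : m - 1 - 1 = m - 2 := by omega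
  simp only [if_true, hm, if_neg hik.symm]
  ring


lemma gt_nOcc_zero_iff {m : ℕ} (x : Fin m → ℕ) (u : ℕ) :
    nOcc x u = 0 ↔ ∀ j, x j ≠ u := by
  simp [nOcc, Finset.card_eq_zero, Finset.filter_eq_empty_iff]

lemma gt_ind_zero {m : ℕ} (x : Fin m → ℕ) (u : ℕ) :
    (if nOcc x u = 0 then (1:ℝ≥0∞) else 0) = ∏ j, if x j = u then 0 else 1 := by
  by_cases h : ∀ j, x j ≠ u
  · rw [if_pos ((gt_nOcc_zero_iff x u).mpr h),
      Finset.prod_congr rfl (fun j _ => if_neg (h j)), Finset.prod_const_one]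
  · push_neg at h
    obtain ⟨j, hj⟩ := h
    rw [if_neg (fun h0 => ((gt_nOcc_zero_iff x u).mp h0) j hj)]
    exact (Finset.prod_eq_zero (Finset.mem_univ j) (if_pos hj : (if x j = u then (0:ℝ≥0∞) else 1) = 0)).symm

lemma gt_ind_one {m : ℕ} (x : Fin m → ℕ) (u : ℕ) :
    (if nOcc x u = 1 then (1:ℝ≥0∞) else 0)
      = ∑ i : Fin m, ∏ j, if j = i then (if x j = u then 1 else 0)
          else (if x j = u then 0 else 1) := by
  by_cases h1 : nOcc x u = 1
  · obtain ⟨i₀, hi₀⟩ := Finset.card_eq_one.mp h1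
    have hxi₀ : x i₀ = u := by
      have := hi₀ ▸ Finset.mem_singleton_self i₀
      exact (Finset.mem_filter.mp this).2
    have hother : ∀ j, j ≠ i₀ → x j ≠ u := by
      intro j hj hxj
      exact hj (Finset.mem_singleton.mp
        (hi₀ ▸ Finset.mem_filter.mpr ⟨Finset.mem_univ j, hxj⟩))
    rw [if_pos h1, Finset.sum_eq_single i₀
      (fun b _ hb => Finset.prod_eq_zero (Finset.mem_univ i₀)
        (by rw [if_neg (Ne.symm hb), if_pos hxi₀]))
      (fun hi => absurd (Finset.mem_univ i₀) hi)]
    rw [Finset.prod_eq_one]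
    intro j _
    by_cases hj : j = i₀
    · simp [hj, hxi₀]
    · simp [hj, hother j hj]
  · rw [if_neg h1]
    symm
    apply Finset.sum_eq_zero
    intro i _
    by_cases hxi : x i = u
    · have hiS : i ∈ Finset.univ.filter (fun j => x j = u) :=
        Finset.mem_filter.mpr ⟨Finset.mem_univ i, hxi⟩
      have hS : (Finset.univ.filter fun j => x j = u) ≠ {i} := by
        intro hS
        exact h1 (by rw [nOcc, hS, Finset.card_singleton])
      have hex : ∃ j ∈ Finset.univ.filter (fun j => x j = u), j ≠ i := by
        by_contra hc
        push_neg at hc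
        exact hS (Finset.eq_singleton_iff_unique_mem.mpr ⟨hiS, hc⟩)
      obtain ⟨j, hjS, hji⟩ := hex
      exact Finset.prod_eq_zero (Finset.mem_univ j)
        (by rw [if_neg hji, if_pos (Finset.mem_filter.mp hjS).2])
    · exact Finset.prod_eq_zero (Finset.mem_univ i) (by simp [hxi])

lemma gt_phi_ennreal {m : ℕ} (x : Fin m → ℕ) :
    ∑' u : ℕ, (if nOcc x u = 1 then (1:ℝ≥0∞) else 0) = (phi 1 x : ℝ≥0∞) := by
  rw [tsum_eq_sum (s := (Finset.univ.image x).filter fun u => nOcc x u = 1)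
    (fun u hu => by
      rw [if_neg]
      intro h1
      apply hu
      have hpos : (Finset.univ.filter fun i => x i = u).Nonempty :=
        Finset.card_pos.mp (by rw [nOcc] at h1; omega)
      obtain ⟨i, hi⟩ := hpos
      exact Finset.mem_filter.mpr
        ⟨Finset.mem_image.mpr ⟨i, Finset.mem_univ i, (Finset.mem_filter.mp hi).2⟩, h1⟩)]
  rw [Finset.sum_congr rfl (fun u hu => if_pos (Finset.mem_filter.mp hu).2),
    Finset.sum_const, phi]
  simp

lemma gt_phi_le {m : ℕ} (x : Fin m → ℕ) : phi 1 x ≤ m :=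
  le_trans (Finset.card_filter_le _ _)
    (le_trans Finset.card_image_le (by simp))



/-- remaining mass after removing one symbol -/
def gtS1 (q : ℕ → ℝ≥0∞) (u : ℕ) : ℝ≥0∞ := ∑' w, if w = u then 0 else q w
/-- remaining mass after removing two symbols -/
def gtS2 (q : ℕ → ℝ≥0∞) (u v : ℕ) : ℝ≥0∞ := ∑' w, if w = u ∨ w = v then 0 else q w

lemma gt_factor_eq (q : ℕ → ℝ≥0∞) (u : ℕ) :
    ∑' w, q w * (if w = u then (1:ℝ≥0∞) else 0) = q u := by
  rw [tsum_congr (fun w => by by_cases h : w = u <;> simp [h] :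
    ∀ w, q w * (if w = u then (1:ℝ≥0∞) else 0) = if w = u then q u else 0)]
  exact tsum_ite_eq u (fun _ => q u)

lemma gt_factor_ne (q : ℕ → ℝ≥0∞) (u : ℕ) :
    ∑' w, q w * (if w = u then (0:ℝ≥0∞) else 1) = gtS1 q u :=
  tsum_congr fun w => by by_cases h : w = u <;> simp [h, gtS1]

lemma gt_factor2_eq_ne {u v : ℕ} (q : ℕ → ℝ≥0∞) (huv : u ≠ v) :
    ∑' w, q w * ((if w = u then (1:ℝ≥0∞) else 0) * (if w = v then (0:ℝ≥0∞) else 1)) = q u := by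
  rw [tsum_congr (fun w => by
    by_cases h : w = u
    · subst h; simp [if_neg huv]
    · simp [h] :
    ∀ w, q w * ((if w = u then (1:ℝ≥0∞) else 0) * (if w = v then (0:ℝ≥0∞) else 1))
      = if w = u then q u else 0)]
  exact tsum_ite_eq u (fun _ => q u)

lemma gt_factor2_ne_eq {u v : ℕ} (q : ℕ → ℝ≥0∞) (huv : u ≠ v) :
    ∑' w, q w * ((if w = u then (0:ℝ≥0∞) else 1) * (if w = v then (1:ℝ≥0∞) else 0)) = q v := by
  rw [tsum_congr (fun w => by
    by_cases h : w = v
    · subst h; simp [if_neg (Ne.symm huv)]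
    · simp [h] :
    ∀ w, q w * ((if w = u then (0:ℝ≥0∞) else 1) * (if w = v then (1:ℝ≥0∞) else 0))
      = if w = v then q v else 0)]
  exact tsum_ite_eq v (fun _ => q v)

lemma gt_factor2_eq_eq {u v : ℕ} (q : ℕ → ℝ≥0∞) (huv : u ≠ v) :
    ∑' w, q w * ((if w = u then (1:ℝ≥0∞) else 0) * (if w = v then (1:ℝ≥0∞) else 0)) = 0 := by
  rw [tsum_congr (fun w => by
    by_cases h : w = u
    · subst h; simp [if_neg huv]
    · simp [h] :
    ∀ w, q w * ((if w = u then (1:ℝ≥0∞) else 0) * (if w = v then (1:ℝ≥0∞) else 0))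
      = 0)]
  exact tsum_zero

lemma gt_factor2_ne_ne (q : ℕ → ℝ≥0∞) (u v : ℕ) :
    ∑' w, q w * ((if w = u then (0:ℝ≥0∞) else 1) * (if w = v then (0:ℝ≥0∞) else 1))
      = gtS2 q u v := by
  refine tsum_congr fun w => ?_
  by_cases h : w = u
  · simp [h, gtS2]
  · by_cases h2 : w = v <;> simp [h, h2, gtS2]

/-- E[𝟙(N_u = 0)] -/
lemma gt_E_b (q : ℕ → ℝ≥0∞) (m : ℕ) (u : ℕ) :
    ∑' x : Fin m → ℕ, (∏ i, q (x i)) * (if nOcc x u = 0 then 1 else 0)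
      = gtS1 q u ^ m := by
  rw [tsum_congr (fun x => by
    rw [gt_ind_zero, ← Finset.prod_mul_distrib] :
    ∀ x : Fin m → ℕ, (∏ i, q (x i)) * (if nOcc x u = 0 then (1:ℝ≥0∞) else 0)
      = ∏ j, (q (x j) * (if x j = u then 0 else 1)))]
  rw [gt_tsum_pi_prod m (fun j w => q w * (if w = u then 0 else 1))]
  rw [Finset.prod_congr rfl (fun j _ => gt_factor_ne q u), Finset.prod_const,
    Finset.card_univ, Fintype.card_fin]

/-- E[𝟙(N_u = 0)𝟙(N_v = 0)] for u ≠ v -/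
lemma gt_E_bb (q : ℕ → ℝ≥0∞) (m : ℕ) (u v : ℕ) :
    ∑' x : Fin m → ℕ, (∏ i, q (x i)) *
        ((if nOcc x u = 0 then 1 else 0) * (if nOcc x v = 0 then 1 else 0))
      = gtS2 q u v ^ m := by
  rw [tsum_congr (fun x => by
    rw [gt_ind_zero, gt_ind_zero, ← Finset.prod_mul_distrib, ← Finset.prod_mul_distrib] :
    ∀ x : Fin m → ℕ, (∏ i, q (x i)) *
        ((if nOcc x u = 0 then (1:ℝ≥0∞) else 0) * (if nOcc x v = 0 then 1 else 0))
      = ∏ j, (q (x j) * ((if x j = u then 0 else 1) * (if x j = v then 0 else 1))))]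
  rw [gt_tsum_pi_prod m (fun j w => q w * ((if w = u then 0 else 1) * (if w = v then 0 else 1)))]
  rw [Finset.prod_congr rfl (fun j _ => gt_factor2_ne_ne q u v), Finset.prod_const,
    Finset.card_univ, Fintype.card_fin]

/-- E[𝟙(N_u = 1)] -/
lemma gt_E_a (q : ℕ → ℝ≥0∞) (m : ℕ) (u : ℕ) :
    ∑' x : Fin m → ℕ, (∏ i, q (x i)) * (if nOcc x u = 1 then 1 else 0)
      = m * (q u * gtS1 q u ^ (m - 1)) := by
  rw [tsum_congr (fun x => by
    rw [gt_ind_one, Finset.mul_sum]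
    exact Finset.sum_congr rfl fun i _ => (Finset.prod_mul_distrib).symm :
    ∀ x : Fin m → ℕ, (∏ i, q (x i)) * (if nOcc x u = 1 then (1:ℝ≥0∞) else 0)
      = ∑ i : Fin m, ∏ j, (q (x j) *
          (if j = i then (if x j = u then 1 else 0) else (if x j = u then 0 else 1))))]
  rw [Summable.tsum_finsetSum (fun i _ => ENNReal.summable)]
  have h2 : ∀ i : Fin m,
      (∑' x : Fin m → ℕ, ∏ j, (q (x j) *
          (if j = i then (if x j = u then 1 else 0) else (if x j = u then 0 else 1))))
        = q u * gtS1 q u ^ (m - 1) := by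
    intro i
    rw [gt_tsum_pi_prod m (fun j w => q w *
      (if j = i then (if w = u then 1 else 0) else (if w = u then 0 else 1)))]
    rw [Finset.prod_congr rfl (fun j _ => by
      by_cases hj : j = i
      · simp only [if_pos hj]; exact gt_factor_eq q u
      · simp only [if_neg hj]; exact gt_factor_ne q u :
      ∀ j ∈ Finset.univ, (∑' w, q w *
        (if j = i then (if w = u then (1:ℝ≥0∞) else 0) else (if w = u then 0 else 1)))
        = if j = i then q u else gtS1 q u)]
    exact gt_prod_one_special i (q u) (gtS1 q u)
  rw [Finset.sum_congr rfl (fun i _ => h2 i), Finset.sum_const, Finset.card_univ,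
    Fintype.card_fin, nsmul_eq_mul]

lemma gt_sum_offdiag {m : ℕ} (D : ℝ≥0∞) :
    (∑ i : Fin m, ∑ k : Fin m, if i = k then 0 else D)
      = (m : ℝ≥0∞) * (((m - 1 : ℕ) : ℝ≥0∞) * D) := by
  have h : ∀ i : Fin m, (∑ k : Fin m, if i = k then 0 else D)
      = ((m - 1 : ℕ) : ℝ≥0∞) * D := by
    intro i
    rw [← Finset.add_sum_erase _ _ (Finset.mem_univ i), if_pos rfl, zero_add]
    rw [Finset.sum_congr rfl (fun k hk => if_neg (Finset.ne_of_mem_erase hk).symm :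
        ∀ k ∈ Finset.univ.erase i, (if i = k then (0:ℝ≥0∞) else D) = D),
      Finset.sum_const, Finset.card_erase_of_mem (Finset.mem_univ i),
      Finset.card_univ, Fintype.card_fin, nsmul_eq_mul]
  rw [Finset.sum_congr rfl (fun i _ => h i), Finset.sum_const, Finset.card_univ,
    Fintype.card_fin, nsmul_eq_mul]

/-- E[𝟙(N_u = 1)𝟙(N_v = 0)] for u ≠ v -/
lemma gt_E_ab {u v : ℕ} (q : ℕ → ℝ≥0∞) (m : ℕ) (huv : u ≠ v) :
    ∑' x : Fin m → ℕ, (∏ i, q (x i)) *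
        ((if nOcc x u = 1 then 1 else 0) * (if nOcc x v = 0 then 1 else 0))
      = m * (q u * gtS2 q u v ^ (m - 1)) := by
  rw [tsum_congr (fun x => by
    rw [gt_ind_one, gt_ind_zero, Finset.sum_mul, Finset.mul_sum]
    refine Finset.sum_congr rfl fun i _ => ?_
    rw [← Finset.prod_mul_distrib, ← Finset.prod_mul_distrib] :
    ∀ x : Fin m → ℕ, (∏ i, q (x i)) *
        ((if nOcc x u = 1 then (1:ℝ≥0∞) else 0) * (if nOcc x v = 0 then 1 else 0))
      = ∑ i : Fin m, ∏ j, (q (x j) *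
          ((if j = i then (if x j = u then 1 else 0) else (if x j = u then 0 else 1)) *
            (if x j = v then 0 else 1))))]
  rw [Summable.tsum_finsetSum (fun i _ => ENNReal.summable)]
  have h2 : ∀ i : Fin m,
      (∑' x : Fin m → ℕ, ∏ j, (q (x j) *
          ((if j = i then (if x j = u then 1 else 0) else (if x j = u then 0 else 1)) *
            (if x j = v then 0 else 1))))
        = q u * gtS2 q u v ^ (m - 1) := by
    intro i
    rw [gt_tsum_pi_prod m (fun j w => q w *
      ((if j = i then (if w = u then 1 else 0) else (if w = u then 0 else 1)) *
        (if w = v then 0 else 1)))]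
    rw [Finset.prod_congr rfl (fun j _ => by
      by_cases hj : j = i
      · simp only [if_pos hj]; exact gt_factor2_eq_ne q huv
      · simp only [if_neg hj]; exact gt_factor2_ne_ne q u v :
      ∀ j ∈ Finset.univ, (∑' w, q w *
        ((if j = i then (if w = u then (1:ℝ≥0∞) else 0) else (if w = u then 0 else 1)) *
          (if w = v then 0 else 1)))
        = if j = i then q u else gtS2 q u v)]
    exact gt_prod_one_special i (q u) (gtS2 q u v)
  rw [Finset.sum_congr rfl (fun i _ => h2 i), Finset.sum_const, Finset.card_univ,
    Fintype.card_fin, nsmul_eq_mul]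

/-- E[𝟙(N_u = 1)𝟙(N_v = 1)] for u ≠ v -/
lemma gt_E_aa_ne {u v : ℕ} (q : ℕ → ℝ≥0∞) (m : ℕ) (huv : u ≠ v) :
    ∑' x : Fin m → ℕ, (∏ i, q (x i)) *
        ((if nOcc x u = 1 then 1 else 0) * (if nOcc x v = 1 then 1 else 0))
      = (m : ℝ≥0∞) * (((m - 1 : ℕ) : ℝ≥0∞) * (q u * q v * gtS2 q u v ^ (m - 2))) := by
  rw [tsum_congr (fun x => by
    rw [gt_ind_one, gt_ind_one, Finset.sum_mul_sum, Finset.mul_sum]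
    refine Finset.sum_congr rfl fun i _ => ?_
    rw [Finset.mul_sum]
    refine Finset.sum_congr rfl fun k _ => ?_
    rw [← Finset.prod_mul_distrib, ← Finset.prod_mul_distrib] :
    ∀ x : Fin m → ℕ, (∏ i, q (x i)) *
        ((if nOcc x u = 1 then (1:ℝ≥0∞) else 0) * (if nOcc x v = 1 then 1 else 0))
      = ∑ i : Fin m, ∑ k : Fin m, ∏ j, (q (x j) *
          ((if j = i then (if x j = u then 1 else 0) else (if x j = u then 0 else 1)) *
            (if j = k then (if x j = v then 1 else 0) else (if x j = v then 0 else 1)))))]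
  rw [Summable.tsum_finsetSum (fun i _ => ENNReal.summable)]
  rw [Finset.sum_congr rfl (fun i _ => Summable.tsum_finsetSum (fun k _ => ENNReal.summable))]
  have h2 : ∀ i k : Fin m,
      (∑' x : Fin m → ℕ, ∏ j, (q (x j) *
          ((if j = i then (if x j = u then 1 else 0) else (if x j = u then 0 else 1)) *
            (if j = k then (if x j = v then 1 else 0) else (if x j = v then 0 else 1)))))
        = if i = k then 0 else q u * q v * gtS2 q u v ^ (m - 2) := by
    intro i k
    rw [gt_tsum_pi_prod m (fun j w => q w *
      ((if j = i then (if w = u then 1 else 0) else (if w = u then 0 else 1)) *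
        (if j = k then (if w = v then 1 else 0) else (if w = v then 0 else 1))))]
    by_cases hik : i = k
    · subst hik
      rw [if_pos rfl]
      refine Finset.prod_eq_zero (Finset.mem_univ i) ?_
      simp only [if_pos rfl]
      exact gt_factor2_eq_eq q huv
    · rw [if_neg hik]
      rw [Finset.prod_congr rfl (fun j _ => by
        by_cases hj : j = i
        · have hjk : j ≠ k := hj ▸ hik
          simp only [if_pos hj, if_neg hjk]
          exact gt_factor2_eq_ne q huv
        · by_cases hjk : j = k
          · simp only [if_neg hj, if_pos hjk]
            exact gt_factor2_ne_eq q huv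
          · simp only [if_neg hj, if_neg hjk]
            exact gt_factor2_ne_ne q u v :
        ∀ j ∈ Finset.univ, (∑' w, q w *
          ((if j = i then (if w = u then (1:ℝ≥0∞) else 0) else (if w = u then 0 else 1)) *
            (if j = k then (if w = v then 1 else 0) else (if w = v then 0 else 1))))
          = if j = i then q u else if j = k then q v else gtS2 q u v)]
      exact gt_prod_two_special hik (q u) (q v) (gtS2 q u v)
  rw [Finset.sum_congr rfl (fun i _ =>
    Finset.sum_congr rfl (fun k _ => h2 i k))]
  exact gt_sum_offdiag _

lemma gt_ab_diag_zero {m : ℕ} (x : Fin m → ℕ) (u : ℕ) :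
    (if nOcc x u = 1 then (1:ℝ≥0∞) else 0) * (if nOcc x u = 0 then 1 else 0) = 0 := by
  by_cases h : nOcc x u = 1 <;> simp [h]

lemma gt_ind_sq {m : ℕ} (x : Fin m → ℕ) (u : ℕ) (k : ℕ) :
    (if nOcc x u = k then (1:ℝ≥0∞) else 0) * (if nOcc x u = k then 1 else 0)
      = (if nOcc x u = k then 1 else 0) := by
  by_cases h : nOcc x u = k <;> simp [h]

lemma gt_swap (m : ℕ) (P : (Fin m → ℕ) → ℝ≥0∞) (F G : ℕ → (Fin m → ℕ) → ℝ≥0∞) :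
    ∑' x : Fin m → ℕ, P x * ((∑' u : ℕ, F u x) * (∑' v : ℕ, G v x))
      = ∑' u : ℕ, ∑' v : ℕ, ∑' x : Fin m → ℕ, P x * (F u x * G v x) := by
  have h1 : ∀ x, P x * ((∑' u : ℕ, F u x) * (∑' v : ℕ, G v x))
      = ∑' u : ℕ, ∑' v : ℕ, P x * (F u x * G v x) := by
    intro x
    rw [show (∑' u : ℕ, F u x) * (∑' v : ℕ, G v x)
        = ∑' u : ℕ, F u x * (∑' v : ℕ, G v x) from ENNReal.tsum_mul_right.symm]
    rw [← ENNReal.tsum_mul_left]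
    refine tsum_congr fun u => ?_
    rw [← ENNReal.tsum_mul_left, ← ENNReal.tsum_mul_left]
  rw [tsum_congr h1, ENNReal.tsum_comm]
  exact tsum_congr fun u => ENNReal.tsum_comm

lemma gt_T1 (q : ℕ → ℝ≥0∞) (m : ℕ) :
    ∑' x : Fin m → ℕ, (∏ i, q (x i)) *
        ((∑' u : ℕ, if nOcc x u = 1 then 1 else 0) *
          (∑' v : ℕ, if nOcc x v = 1 then 1 else 0))
      = ∑' u : ℕ, ∑' v : ℕ,
          (if u = v then (m : ℝ≥0∞) * (q u * gtS1 q u ^ (m - 1))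
            else (m : ℝ≥0∞) * (((m - 1 : ℕ) : ℝ≥0∞) * (q u * q v * gtS2 q u v ^ (m - 2)))) := by
  rw [gt_swap m _ (fun u x => if nOcc x u = 1 then 1 else 0)
    (fun v x => if nOcc x v = 1 then 1 else 0)]
  refine tsum_congr fun u => tsum_congr fun v => ?_
  by_cases huv : u = v
  · subst huv
    rw [if_pos rfl, tsum_congr (fun x => by rw [gt_ind_sq])]
    exact gt_E_a q m u
  · rw [if_neg huv]
    exact gt_E_aa_ne q m huv

lemma gt_T2 (q : ℕ → ℝ≥0∞) (m : ℕ) :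
    ∑' x : Fin m → ℕ, (∏ i, q (x i)) *
        ((∑' u : ℕ, if nOcc x u = 1 then 1 else 0) *
          (∑' v : ℕ, if nOcc x v = 0 then q v else 0))
      = ∑' u : ℕ, ∑' v : ℕ,
          (if u = v then 0
            else q v * ((m : ℝ≥0∞) * (q u * gtS2 q u v ^ (m - 1)))) := by
  rw [gt_swap m _ (fun u x => if nOcc x u = 1 then 1 else 0)
    (fun v x => if nOcc x v = 0 then q v else 0)]
  refine tsum_congr fun u => tsum_congr fun v => ?_
  have hBv : ∀ x : Fin m → ℕ, (if nOcc x v = 0 then q v else 0)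
      = q v * (if nOcc x v = 0 then 1 else 0) := by
    intro x; by_cases h : nOcc x v = 0 <;> simp [h]
  by_cases huv : u = v
  · subst huv
    rw [if_pos rfl]
    rw [tsum_congr (fun x => by rw [hBv, show
        (∏ i, q (x i)) * ((if nOcc x u = 1 then (1:ℝ≥0∞) else 0) *
          (q u * (if nOcc x u = 0 then 1 else 0)))
        = (∏ i, q (x i)) * (q u *
            ((if nOcc x u = 1 then (1:ℝ≥0∞) else 0) * (if nOcc x u = 0 then 1 else 0)))
        from by ring, gt_ab_diag_zero])]
    simp
  · rw [if_neg huv]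
    rw [tsum_congr (fun x => by rw [hBv, show
        (∏ i, q (x i)) * ((if nOcc x u = 1 then (1:ℝ≥0∞) else 0) *
          (q v * (if nOcc x v = 0 then 1 else 0)))
        = q v * ((∏ i, q (x i)) *
            ((if nOcc x u = 1 then (1:ℝ≥0∞) else 0) * (if nOcc x v = 0 then 1 else 0)))
        from by ring])]
    rw [ENNReal.tsum_mul_left, gt_E_ab q m huv]

lemma gt_T3 (q : ℕ → ℝ≥0∞) (m : ℕ) :
    ∑' x : Fin m → ℕ, (∏ i, q (x i)) *
        ((∑' u : ℕ, if nOcc x u = 0 then q u else 0) *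
          (∑' v : ℕ, if nOcc x v = 0 then q v else 0))
      = ∑' u : ℕ, ∑' v : ℕ,
          (if u = v then q u * q u * gtS1 q u ^ m
            else q u * q v * gtS2 q u v ^ m) := by
  rw [gt_swap m _ (fun u x => if nOcc x u = 0 then q u else 0)
    (fun v x => if nOcc x v = 0 then q v else 0)]
  refine tsum_congr fun u => tsum_congr fun v => ?_
  have hB : ∀ (w : ℕ) (x : Fin m → ℕ), (if nOcc x w = 0 then q w else 0)
      = q w * (if nOcc x w = 0 then 1 else 0) := by
    intro w x; by_cases h : nOcc x w = 0 <;> simp [h]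
  rw [tsum_congr (fun x => by rw [hB u, hB v, show
      (∏ i, q (x i)) * ((q u * (if nOcc x u = 0 then (1:ℝ≥0∞) else 0)) *
        (q v * (if nOcc x v = 0 then (1:ℝ≥0∞) else 0)))
      = (q u * q v) * ((∏ i, q (x i)) *
          ((if nOcc x u = 0 then (1:ℝ≥0∞) else 0) * (if nOcc x v = 0 then 1 else 0)))
      from by ring])]
  rw [ENNReal.tsum_mul_left]
  by_cases huv : u = v
  · subst huv
    rw [if_pos rfl, tsum_congr (fun x => by rw [gt_ind_sq]), gt_E_b q m u]
  · rw [if_neg huv, gt_E_bb q m u v]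

lemma gt_tsum_split (f : ℕ → ℝ≥0∞) (u : ℕ) :
    ∑' w, f w = f u + ∑' w, if w = u then 0 else f w := by
  rw [ENNReal.tsum_eq_add_tsum_ite u]
  congr 1
  exact tsum_congr fun w => by by_cases h : w = u <;> simp [h]

lemma gt_q_sum (p : ℕ → ℝ) (hp0 : ∀ u, 0 ≤ p u) (hp1 : HasSum p 1) :
    ∑' w : ℕ, ENNReal.ofReal (p w) = 1 := by
  rw [← ENNReal.ofReal_tsum_of_nonneg hp0 hp1.summable, hp1.tsum_eq, ENNReal.ofReal_one]

lemma gt_p_le_one (p : ℕ → ℝ) (hp0 : ∀ u, 0 ≤ p u) (hp1 : HasSum p 1) (u : ℕ) :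
    p u ≤ 1 := by
  have := Summable.le_tsum hp1.summable u (fun j _ => hp0 j)
  rwa [hp1.tsum_eq] at this

lemma gt_S1_split (p : ℕ → ℝ) (hp0 : ∀ u, 0 ≤ p u) (hp1 : HasSum p 1) (u : ℕ) :
    (1 : ℝ≥0∞) = ENNReal.ofReal (p u) + gtS1 (fun w => ENNReal.ofReal (p w)) u := by
  rw [← gt_q_sum p hp0 hp1]
  simp only [gtS1]
  exact gt_tsum_split _ u

lemma gt_S1_ne_top (p : ℕ → ℝ) (hp0 : ∀ u, 0 ≤ p u) (hp1 : HasSum p 1) (u : ℕ) :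
    gtS1 (fun w => ENNReal.ofReal (p w)) u ≠ ⊤ :=
  ne_top_of_le_ne_top ENNReal.one_ne_top
    (le_of_le_of_eq (self_le_add_left _ _) (gt_S1_split p hp0 hp1 u).symm)

lemma gt_S1_toReal (p : ℕ → ℝ) (hp0 : ∀ u, 0 ≤ p u) (hp1 : HasSum p 1) (u : ℕ) :
    (gtS1 (fun w => ENNReal.ofReal (p w)) u).toReal = 1 - p u := by
  have h := congrArg ENNReal.toReal (gt_S1_split p hp0 hp1 u)
  rw [ENNReal.toReal_one, ENNReal.toReal_add ENNReal.ofReal_ne_top (gt_S1_ne_top p hp0 hp1 u),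
    ENNReal.toReal_ofReal (hp0 u)] at h
  linarith

lemma gt_S2_split (p : ℕ → ℝ) (hp0 : ∀ u, 0 ≤ p u) (hp1 : HasSum p 1) {u v : ℕ} (huv : u ≠ v) :
    (1 : ℝ≥0∞) = ENNReal.ofReal (p u) +
      (ENNReal.ofReal (p v) + gtS2 (fun w => ENNReal.ofReal (p w)) u v) := by
  rw [gt_S1_split p hp0 hp1 u]
  congr 1
  rw [gtS1, gt_tsum_split (fun w => if w = u then 0 else ENNReal.ofReal (p w)) v,
    if_neg (Ne.symm huv)]
  congr 1
  refine tsum_congr fun w => ?_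
  by_cases h1 : w = v
  · simp [h1, gtS2]
  · by_cases h2 : w = u <;> simp [h1, h2, gtS2]

lemma gt_S2_ne_top (p : ℕ → ℝ) (hp0 : ∀ u, 0 ≤ p u) (hp1 : HasSum p 1) {u v : ℕ} (huv : u ≠ v) :
    gtS2 (fun w => ENNReal.ofReal (p w)) u v ≠ ⊤ := by
  refine ne_top_of_le_ne_top ENNReal.one_ne_top ?_
  rw [gt_S2_split p hp0 hp1 huv]
  calc gtS2 (fun w => ENNReal.ofReal (p w)) u v
      ≤ ENNReal.ofReal (p v) + gtS2 (fun w => ENNReal.ofReal (p w)) u v :=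
        self_le_add_left _ _
    _ ≤ _ := self_le_add_left _ _

lemma gt_S2_toReal (p : ℕ → ℝ) (hp0 : ∀ u, 0 ≤ p u) (hp1 : HasSum p 1) {u v : ℕ} (huv : u ≠ v) :
    (gtS2 (fun w => ENNReal.ofReal (p w)) u v).toReal = 1 - p u - p v := by
  have h := congrArg ENNReal.toReal (gt_S2_split p hp0 hp1 huv)
  rw [ENNReal.toReal_one, ENNReal.toReal_add ENNReal.ofReal_ne_top
      (by exact ENNReal.add_ne_top.mpr ⟨ENNReal.ofReal_ne_top, gt_S2_ne_top p hp0 hp1 huv⟩),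
    ENNReal.toReal_add ENNReal.ofReal_ne_top (gt_S2_ne_top p hp0 hp1 huv),
    ENNReal.toReal_ofReal (hp0 u), ENNReal.toReal_ofReal (hp0 v)] at h
  linarith

lemma gt_P_sum (p : ℕ → ℝ) (hp0 : ∀ u, 0 ≤ p u) (hp1 : HasSum p 1) (m : ℕ) :
    ∑' x : Fin m → ℕ, ∏ i, ENNReal.ofReal (p (x i)) = 1 := by
  rw [gt_tsum_pi_prod m (fun _ w => ENNReal.ofReal (p w)),
    Finset.prod_congr rfl (fun i _ => gt_q_sum p hp0 hp1), Finset.prod_const_one]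

lemma gt_sampleProb_toReal (p : ℕ → ℝ) (hp0 : ∀ u, 0 ≤ p u) {m : ℕ} (x : Fin m → ℕ) :
    sampleProb p x = (∏ i, ENNReal.ofReal (p (x i))).toReal := by
  rw [ENNReal.toReal_prod, sampleProb]
  exact Finset.prod_congr rfl fun i _ => (ENNReal.toReal_ofReal (hp0 _)).symm

lemma gt_missing_toReal (p : ℕ → ℝ) (hp0 : ∀ u, 0 ≤ p u) {m : ℕ} (x : Fin m → ℕ) :
    missingMass p x
      = (∑' v : ℕ, if nOcc x v = 0 then ENNReal.ofReal (p v) else 0).toReal := by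
  rw [ENNReal.tsum_toReal_eq (fun v => by
    split
    · exact ENNReal.ofReal_ne_top
    · exact ENNReal.zero_ne_top), missingMass]
  refine tsum_congr fun v => ?_
  split
  · exact (ENNReal.toReal_ofReal (hp0 v)).symm
  · simp

lemma gt_M_le_one (p : ℕ → ℝ) (hp0 : ∀ u, 0 ≤ p u) (hp1 : HasSum p 1) {m : ℕ}
    (x : Fin m → ℕ) :
    (∑' v : ℕ, if nOcc x v = 0 then ENNReal.ofReal (p v) else 0) ≤ 1 := by
  rw [← gt_q_sum p hp0 hp1]
  refine Summable.tsum_le_tsum (fun v => ?_) ENNReal.summable ENNReal.summable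
  split
  · exact le_rfl
  · exact zero_le

lemma gt_phi_toReal {m : ℕ} (x : Fin m → ℕ) :
    ((phi 1 x : ℝ)) = (∑' u : ℕ, if nOcc x u = 1 then (1:ℝ≥0∞) else 0).toReal := by
  rw [gt_phi_ennreal]
  simp

lemma gt_Phi_le {m : ℕ} (x : Fin m → ℕ) :
    (∑' u : ℕ, if nOcc x u = 1 then (1:ℝ≥0∞) else 0) ≤ (m : ℝ≥0∞) := by
  rw [gt_phi_ennreal]
  exact_mod_cast Nat.cast_le.mpr (gt_phi_le x)

/-- closed form for `E[a_u a_v]` -/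
def gtE1 (p : ℕ → ℝ) (m u v : ℕ) : ℝ≥0∞ :=
  if u = v then (m : ℝ≥0∞) * (ENNReal.ofReal (p u) *
      gtS1 (fun w => ENNReal.ofReal (p w)) u ^ (m - 1))
    else (m : ℝ≥0∞) * (((m - 1 : ℕ) : ℝ≥0∞) *
      (ENNReal.ofReal (p u) * ENNReal.ofReal (p v) *
        gtS2 (fun w => ENNReal.ofReal (p w)) u v ^ (m - 2)))

/-- closed form for `E[a_u (p_v b_v)]` -/
def gtE2 (p : ℕ → ℝ) (m u v : ℕ) : ℝ≥0∞ :=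
  if u = v then 0
    else ENNReal.ofReal (p v) * ((m : ℝ≥0∞) * (ENNReal.ofReal (p u) *
      gtS2 (fun w => ENNReal.ofReal (p w)) u v ^ (m - 1)))

/-- closed form for `E[(p_u b_u)(p_v b_v)]` -/
def gtE3 (p : ℕ → ℝ) (m u v : ℕ) : ℝ≥0∞ :=
  if u = v then ENNReal.ofReal (p u) * ENNReal.ofReal (p u) *
      gtS1 (fun w => ENNReal.ofReal (p w)) u ^ m
    else ENNReal.ofReal (p u) * ENNReal.ofReal (p v) *
      gtS2 (fun w => ENNReal.ofReal (p w)) u v ^ m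

lemma gt_T1' (p : ℕ → ℝ) (m : ℕ) :
    ∑' x : Fin m → ℕ, (∏ i, ENNReal.ofReal (p (x i))) *
        ((∑' u : ℕ, if nOcc x u = 1 then 1 else 0) *
          (∑' v : ℕ, if nOcc x v = 1 then 1 else 0))
      = ∑' u : ℕ, ∑' v : ℕ, gtE1 p m u v :=
  gt_T1 (fun w => ENNReal.ofReal (p w)) m

lemma gt_T2' (p : ℕ → ℝ) (m : ℕ) :
    ∑' x : Fin m → ℕ, (∏ i, ENNReal.ofReal (p (x i))) *
        ((∑' u : ℕ, if nOcc x u = 1 then 1 else 0) *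
          (∑' v : ℕ, if nOcc x v = 0 then ENNReal.ofReal (p v) else 0))
      = ∑' u : ℕ, ∑' v : ℕ, gtE2 p m u v :=
  gt_T2 (fun w => ENNReal.ofReal (p w)) m

lemma gt_T3' (p : ℕ → ℝ) (m : ℕ) :
    ∑' x : Fin m → ℕ, (∏ i, ENNReal.ofReal (p (x i))) *
        ((∑' u : ℕ, if nOcc x u = 0 then ENNReal.ofReal (p u) else 0) *
          (∑' v : ℕ, if nOcc x v = 0 then ENNReal.ofReal (p v) else 0))
      = ∑' u : ℕ, ∑' v : ℕ, gtE3 p m u v :=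
  gt_T3 (fun w => ENNReal.ofReal (p w)) m

lemma gt_E1_toReal (p : ℕ → ℝ) (hp0 : ∀ u, 0 ≤ p u) (hp1 : HasSum p 1) (m u v : ℕ) :
    (gtE1 p m u v).toReal
      = if u = v then (m : ℝ) * (p u * (1 - p u) ^ (m - 1))
        else (m : ℝ) * (((m - 1 : ℕ) : ℝ) * (p u * p v * (1 - p u - p v) ^ (m - 2))) := by
  by_cases h : u = v
  · subst h
    rw [gtE1, if_pos rfl, if_pos rfl]
    rw [ENNReal.toReal_mul, ENNReal.toReal_mul, ENNReal.toReal_pow,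
      gt_S1_toReal p hp0 hp1 u, ENNReal.toReal_ofReal (hp0 u), ENNReal.toReal_natCast]
  · rw [gtE1, if_neg h, if_neg h]
    rw [ENNReal.toReal_mul, ENNReal.toReal_mul, ENNReal.toReal_mul, ENNReal.toReal_mul,
      ENNReal.toReal_pow, gt_S2_toReal p hp0 hp1 h, ENNReal.toReal_ofReal (hp0 u),
      ENNReal.toReal_ofReal (hp0 v), ENNReal.toReal_natCast, ENNReal.toReal_natCast]

lemma gt_E2_toReal (p : ℕ → ℝ) (hp0 : ∀ u, 0 ≤ p u) (hp1 : HasSum p 1) (m u v : ℕ) :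
    (gtE2 p m u v).toReal
      = if u = v then 0
        else p v * ((m : ℝ) * (p u * (1 - p u - p v) ^ (m - 1))) := by
  by_cases h : u = v
  · rw [gtE2, if_pos h, if_pos h, ENNReal.toReal_zero]
  · rw [gtE2, if_neg h, if_neg h]
    rw [ENNReal.toReal_mul, ENNReal.toReal_mul, ENNReal.toReal_mul, ENNReal.toReal_pow,
      gt_S2_toReal p hp0 hp1 h, ENNReal.toReal_ofReal (hp0 u),
      ENNReal.toReal_ofReal (hp0 v), ENNReal.toReal_natCast]

lemma gt_E3_toReal (p : ℕ → ℝ) (hp0 : ∀ u, 0 ≤ p u) (hp1 : HasSum p 1) (m u v : ℕ) :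
    (gtE3 p m u v).toReal
      = if u = v then p u * p u * (1 - p u) ^ m
        else p u * p v * (1 - p u - p v) ^ m := by
  by_cases h : u = v
  · subst h
    rw [gtE3, if_pos rfl, if_pos rfl]
    rw [ENNReal.toReal_mul, ENNReal.toReal_mul, ENNReal.toReal_pow,
      gt_S1_toReal p hp0 hp1 u, ENNReal.toReal_ofReal (hp0 u)]
  · rw [gtE3, if_neg h, if_neg h]
    rw [ENNReal.toReal_mul, ENNReal.toReal_mul, ENNReal.toReal_pow,
      gt_S2_toReal p hp0 hp1 h, ENNReal.toReal_ofReal (hp0 u),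
      ENNReal.toReal_ofReal (hp0 v)]

lemma gt_tsum_P_bound (p : ℕ → ℝ) (hp0 : ∀ u, 0 ≤ p u) (hp1 : HasSum p 1) (m : ℕ)
    (g : (Fin m → ℕ) → ℝ≥0∞) (c : ℝ≥0∞) (hc : c ≠ ⊤) (hg : ∀ x, g x ≤ c) :
    (∑' x : Fin m → ℕ, (∏ i, ENNReal.ofReal (p (x i))) * g x) ≠ ⊤ := by
  have h2 : (∑' x : Fin m → ℕ, (∏ i, ENNReal.ofReal (p (x i))) * c) ≠ ⊤ := by
    rw [ENNReal.tsum_mul_right, gt_P_sum p hp0 hp1 m, one_mul]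
    exact hc
  exact ne_top_of_le_ne_top h2
    (Summable.tsum_le_tsum (fun x => mul_le_mul_right (hg x) _) ENNReal.summable ENNReal.summable)

lemma gt_double_transfer (E : ℕ → ℕ → ℝ≥0∞) (h : (∑' u : ℕ, ∑' v : ℕ, E u v) ≠ ⊤) :
    ((∑' u : ℕ, ∑' v : ℕ, E u v).toReal = ∑' u : ℕ, ∑' v : ℕ, (E u v).toReal)
    ∧ (∀ u, Summable fun v => (E u v).toReal)
    ∧ Summable (fun u => ∑' v : ℕ, (E u v).toReal) := by
  have hinner : ∀ u, (∑' v : ℕ, E u v) ≠ ⊤ :=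
    fun u => ne_top_of_le_ne_top h (ENNReal.le_tsum u)
  have h1 : ∀ u, (∑' v : ℕ, (E u v).toReal) = (∑' v : ℕ, E u v).toReal := fun u =>
    (ENNReal.tsum_toReal_eq (fun v => ne_top_of_le_ne_top (hinner u) (ENNReal.le_tsum v))).symm
  refine ⟨?_, fun u => ENNReal.summable_toReal (hinner u), ?_⟩
  · rw [ENNReal.tsum_toReal_eq hinner]
    exact tsum_congr fun u => (h1 u).symm
  · exact (ENNReal.summable_toReal h).congr (fun u => (h1 u).symm)

lemma gt_pair_le_one (p : ℕ → ℝ) (hp0 : ∀ u, 0 ≤ p u) (hp1 : HasSum p 1) {u v : ℕ}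
    (huv : u ≠ v) : p u + p v ≤ 1 := by
  have := Summable.sum_le_tsum ({u, v} : Finset ℕ) (fun i _ => hp0 i) hp1.summable
  rw [Finset.sum_pair huv, hp1.tsum_eq] at this
  exact this

/-- The per-pair closed form of the risk. -/
def gtG (p : ℕ → ℝ) (m u v : ℕ) : ℝ :=
  if u = v then
    (1 / (m : ℝ)) * (p u * (1 - p u) ^ (m - 1) + (m : ℝ) * p u ^ 2 * (1 - p u) ^ m)
  else
    (1 / (m : ℝ)) * (p u * p v * (1 - p u - p v) ^ (m - 2) * ((m : ℝ) * (p u + p v) ^ 2 - 1))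

lemma gt_combo_eq_G (p : ℕ → ℝ) (hp0 : ∀ u, 0 ≤ p u) (hp1 : HasSum p 1) (n : ℕ)
    (hn : 2 ≤ n) (u v : ℕ) :
    (1 / (n:ℝ) ^ 2) * (gtE1 p n u v).toReal - (2 / (n:ℝ)) * (gtE2 p n u v).toReal
      + (gtE3 p n u v).toReal = gtG p n u v := by
  have hn0 : (n : ℝ) ≠ 0 := Nat.cast_ne_zero.mpr (by omega)
  rw [gt_E1_toReal p hp0 hp1, gt_E2_toReal p hp0 hp1, gt_E3_toReal p hp0 hp1]
  by_cases h : u = v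
  · subst h
    rw [if_pos rfl, if_pos rfl, if_pos rfl, gtG, if_pos rfl]
    field_simp
    ring
  · rw [if_neg h, if_neg h, if_neg h, gtG, if_neg h]
    have hc : ((n - 1 : ℕ) : ℝ) = (n : ℝ) - 1 := by
      rw [Nat.cast_sub (by omega)]
      norm_num
    have hb1 : (1 - p u - p v) ^ (n - 1) = (1 - p u - p v) ^ (n - 2) * (1 - p u - p v) := by
      rw [show n - 1 = (n - 2) + 1 by omega, pow_succ]
    have hb2 : (1 - p u - p v) ^ n = (1 - p u - p v) ^ (n - 2) * (1 - p u - p v) ^ 2 := by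
      conv_lhs => rw [show n = (n - 2) + 2 by omega]
      rw [pow_add]
    rw [hc, hb1, hb2]
    field_simp
    ring

set_option maxHeartbeats 1600000 in
lemma gt_claim2 (p : ℕ → ℝ) (hp0 : ∀ u, 0 ≤ p u) (hp1 : HasSum p 1) (n : ℕ) (hn : 2 ≤ n) :
    (1 / n) * (∑' u : ℕ, ∑' v : ℕ,
        if u ≠ v then
          p u * p v * (1 - p u - p v) ^ (n - 2) * ((n : ℝ) * (p u + p v) ^ 2 - 1)
        else 0)
      + (1 / n) * ∑' u : ℕ,
          (p u * (1 - p u) ^ (n - 1) + (n : ℝ) * p u ^ 2 * (1 - p u) ^ n)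
    = ∑' u : ℕ, ∑' v : ℕ, gtG p n u v := by
  have hn0 : (n : ℝ) ≠ 0 := Nat.cast_ne_zero.mpr (by omega)
  have hOFFabs : ∀ u v, |if u ≠ v then
      p u * p v * (1 - p u - p v) ^ (n - 2) * ((n : ℝ) * (p u + p v) ^ 2 - 1)
      else 0| ≤ (p u * ((n : ℝ) + 1)) * p v := by
    intro u v
    by_cases h : u ≠ v
    · rw [if_pos h]
      have h1 : 0 ≤ 1 - p u - p v := by
        have := gt_pair_le_one p hp0 hp1 h
        linarith
      have h2 : (1 - p u - p v) ^ (n - 2) ≤ 1 :=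
        pow_le_one₀ h1 (by have := hp0 u; have := hp0 v; linarith)
      have h4 : 0 ≤ (1 - p u - p v) ^ (n - 2) := pow_nonneg h1 _
      have h3 : |(n : ℝ) * (p u + p v) ^ 2 - 1| ≤ (n : ℝ) + 1 := by
        have hs0 : 0 ≤ p u + p v := by have := hp0 u; have := hp0 v; linarith
        have hs1 : p u + p v ≤ 1 := gt_pair_le_one p hp0 hp1 h
        have hsq : (p u + p v) ^ 2 ≤ 1 := by nlinarith
        have hn1 : (0 : ℝ) ≤ n := Nat.cast_nonneg n
        rw [abs_le]
        constructor <;> nlinarith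
      rw [abs_mul, abs_of_nonneg (mul_nonneg (mul_nonneg (hp0 u) (hp0 v)) h4)]
      have hb : p u * p v * (1 - p u - p v) ^ (n - 2) ≤ p u * p v := by
        nlinarith [mul_nonneg (hp0 u) (hp0 v)]
      nlinarith [hp0 u, hp0 v, abs_nonneg ((n : ℝ) * (p u + p v) ^ 2 - 1),
        mul_nonneg (hp0 u) (hp0 v)]
    · rw [if_neg h, abs_zero]
      have := hp0 u
      have := hp0 v
      positivity
  have hOFFsummable : ∀ u, Summable (fun v => if u ≠ v then
      p u * p v * (1 - p u - p v) ^ (n - 2) * ((n : ℝ) * (p u + p v) ^ 2 - 1)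
      else 0) := fun u =>
    Summable.of_norm_bounded (hp1.summable.mul_left (p u * ((n : ℝ) + 1))) (hOFFabs u)
  have hDnonneg : ∀ u, 0 ≤ p u * (1 - p u) ^ (n - 1) + (n : ℝ) * p u ^ 2 * (1 - p u) ^ n := by
    intro u
    have h1 : 0 ≤ 1 - p u := by
      have := gt_p_le_one p hp0 hp1 u
      linarith
    have h2 := hp0 u
    positivity
  have hDle : ∀ u, p u * (1 - p u) ^ (n - 1) + (n : ℝ) * p u ^ 2 * (1 - p u) ^ n
      ≤ (1 + (n : ℝ)) * p u := by
    intro u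
    have h1 : 0 ≤ 1 - p u := by
      have := gt_p_le_one p hp0 hp1 u
      linarith
    have h2 := hp0 u
    have h3 : (1 - p u) ^ (n - 1) ≤ 1 := pow_le_one₀ h1 (by linarith)
    have h4 : (1 - p u) ^ n ≤ 1 := pow_le_one₀ h1 (by linarith)
    have h5 : 0 ≤ (1 - p u) ^ (n - 1) := pow_nonneg h1 _
    have h6 : 0 ≤ (1 - p u) ^ n := pow_nonneg h1 _
    have h7 : p u ≤ 1 := gt_p_le_one p hp0 hp1 u
    have hn1 : (0 : ℝ) ≤ n := Nat.cast_nonneg n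
    have k0 : p u ^ 2 ≤ p u := by nlinarith
    have e1 : p u * (1 - p u) ^ (n - 1) ≤ p u := mul_le_of_le_one_right h2 h3
    have k1 : p u ^ 2 * (1 - p u) ^ n ≤ p u :=
      (mul_le_of_le_one_right (sq_nonneg _) h4).trans k0
    have e2 : (n : ℝ) * p u ^ 2 * (1 - p u) ^ n ≤ (n : ℝ) * p u := by
      calc (n : ℝ) * p u ^ 2 * (1 - p u) ^ n
          = (n : ℝ) * (p u ^ 2 * (1 - p u) ^ n) := by ring
        _ ≤ (n : ℝ) * p u := mul_le_mul_of_nonneg_left k1 hn1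
    linarith
  have hDsummable : Summable (fun u =>
      p u * (1 - p u) ^ (n - 1) + (n : ℝ) * p u ^ 2 * (1 - p u) ^ n) :=
    Summable.of_nonneg_of_le hDnonneg hDle (hp1.summable.mul_left (1 + (n : ℝ)))
  have hinner : ∀ u, (∑' v : ℕ, gtG p n u v)
      = (1 / (n : ℝ)) * (∑' v : ℕ, if u ≠ v then
            p u * p v * (1 - p u - p v) ^ (n - 2) * ((n : ℝ) * (p u + p v) ^ 2 - 1)
          else 0)
        + (1 / (n : ℝ)) *
          (p u * (1 - p u) ^ (n - 1) + (n : ℝ) * p u ^ 2 * (1 - p u) ^ n) := by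
    intro u
    have hpt : ∀ v, gtG p n u v
        = (1 / (n : ℝ)) * (if u ≠ v then
            p u * p v * (1 - p u - p v) ^ (n - 2) * ((n : ℝ) * (p u + p v) ^ 2 - 1)
          else 0)
          + (if v = u then (1 / (n : ℝ)) *
              (p u * (1 - p u) ^ (n - 1) + (n : ℝ) * p u ^ 2 * (1 - p u) ^ n) else 0) := by
      intro v
      by_cases hvu : v = u
      · subst hvu
        rw [gtG, if_pos rfl, if_neg (fun h => h rfl), if_pos rfl]
        ring
      · rw [gtG, if_neg (fun h => hvu h.symm), if_pos (fun h => hvu h.symm), if_neg hvu]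
        ring
    rw [tsum_congr hpt,
      Summable.tsum_add ((hOFFsummable u).mul_left _) ((hasSum_ite_eq u _).summable),
      tsum_ite_eq u _, tsum_mul_left]
  rw [tsum_congr hinner]
  have hA : Summable (fun u => (1 / (n : ℝ)) * (∑' v : ℕ, if u ≠ v then
      p u * p v * (1 - p u - p v) ^ (n - 2) * ((n : ℝ) * (p u + p v) ^ 2 - 1)
      else 0)) := by
    refine Summable.of_norm_bounded
      (g := fun u => (1 / (n : ℝ)) * (((n : ℝ) + 1) * p u))
      ((hp1.summable.mul_left ((n : ℝ) + 1)).mul_left (1 / (n : ℝ))) ?_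
    intro u
    rw [norm_mul]
    have h1 : ‖(1 / (n : ℝ))‖ = 1 / (n : ℝ) := by
      rw [Real.norm_eq_abs, abs_of_nonneg (by positivity)]
    rw [h1]
    refine mul_le_mul_of_nonneg_left ?_ (by positivity)
    calc ‖∑' v : ℕ, if u ≠ v then
          p u * p v * (1 - p u - p v) ^ (n - 2) * ((n : ℝ) * (p u + p v) ^ 2 - 1)
          else 0‖
        ≤ ∑' v : ℕ, ‖if u ≠ v then
            p u * p v * (1 - p u - p v) ^ (n - 2) * ((n : ℝ) * (p u + p v) ^ 2 - 1)
            else 0‖ := norm_tsum_le_tsum_norm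
              (((hOFFsummable u).abs).congr (fun v => (Real.norm_eq_abs _).symm))
      _ ≤ ∑' v : ℕ, (p u * ((n : ℝ) + 1)) * p v :=
          Summable.tsum_le_tsum (fun v => by rw [Real.norm_eq_abs]; exact hOFFabs u v)
            (((hOFFsummable u).abs).congr (fun v => (Real.norm_eq_abs _).symm))
            (hp1.summable.mul_left _)
      _ = (p u * ((n : ℝ) + 1)) * ∑' v : ℕ, p v := tsum_mul_left
      _ = ((n : ℝ) + 1) * p u := by rw [hp1.tsum_eq]; ring
  have hB : Summable (fun u => (1 / (n : ℝ)) *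
      (p u * (1 - p u) ^ (n - 1) + (n : ℝ) * p u ^ 2 * (1 - p u) ^ n)) :=
    hDsummable.mul_left _
  rw [Summable.tsum_add hA hB, tsum_mul_left, tsum_mul_left]

end GTAux

/-- **Exact risk identity for the Good-Turing estimator** (equation (9)).
For every pmf `p` on `ℕ` and every `n ≥ 2`,
`R_n(M^GT, p) = (1/n) ∑_{u ≠ v} p(u)p(v)(1-p(u)-p(v))^{n-2} [n (p(u)+p(v))² - 1]
             + (1/n) ∑_u [p(u)(1-p(u))^{n-1} + n p(u)² (1-p(u))^n]`. -/
theorem goodTuring_risk_identity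
    (p : ℕ → ℝ) (hp : IsPMF p) (n : ℕ) (hn : 2 ≤ n) :
    risk n p goodTuring =
      (1 / n) * (∑' u : ℕ, ∑' v : ℕ,
          if u ≠ v then
            p u * p v * (1 - p u - p v) ^ (n - 2) * ((n : ℝ) * (p u + p v) ^ 2 - 1)
          else 0)
      + (1 / n) * ∑' u : ℕ,
          (p u * (1 - p u) ^ (n - 1) + (n : ℝ) * p u ^ 2 * (1 - p u) ^ n) := by
  obtain ⟨hp0, hp1⟩ := hp
  have hn0 : (n : ℝ) ≠ 0 := Nat.cast_ne_zero.mpr (by omega)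
  have hfin1 : (∑' u : ℕ, ∑' v : ℕ, gtE1 p n u v) ≠ ⊤ := by
    rw [← gt_T1' p n]
    exact gt_tsum_P_bound p hp0 hp1 n _ ((n : ℝ≥0∞) * (n : ℝ≥0∞))
      (ENNReal.mul_ne_top (ENNReal.natCast_ne_top n) (ENNReal.natCast_ne_top n))
      (fun x => mul_le_mul' (gt_Phi_le x) (gt_Phi_le x))
  have hfin2 : (∑' u : ℕ, ∑' v : ℕ, gtE2 p n u v) ≠ ⊤ := by
    rw [← gt_T2' p n]
    exact gt_tsum_P_bound p hp0 hp1 n _ ((n : ℝ≥0∞) * 1)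
      (ENNReal.mul_ne_top (ENNReal.natCast_ne_top n) ENNReal.one_ne_top)
      (fun x => mul_le_mul' (gt_Phi_le x) (gt_M_le_one p hp0 hp1 x))
  have hfin3 : (∑' u : ℕ, ∑' v : ℕ, gtE3 p n u v) ≠ ⊤ := by
    rw [← gt_T3' p n]
    exact gt_tsum_P_bound p hp0 hp1 n _ ((1 : ℝ≥0∞) * 1)
      (ENNReal.mul_ne_top ENNReal.one_ne_top ENNReal.one_ne_top)
      (fun x => mul_le_mul' (gt_M_le_one p hp0 hp1 x) (gt_M_le_one p hp0 hp1 x))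
  obtain ⟨hT1r, hS1i, hS1o⟩ := gt_double_transfer _ hfin1
  obtain ⟨hT2r, hS2i, hS2o⟩ := gt_double_transfer _ hfin2
  obtain ⟨hT3r, hS3i, hS3o⟩ := gt_double_transfer _ hfin3
  have hxfin1 : (∑' x : Fin n → ℕ, (∏ i, ENNReal.ofReal (p (x i))) *
      ((∑' u : ℕ, if nOcc x u = 1 then 1 else 0) *
        (∑' v : ℕ, if nOcc x v = 1 then 1 else 0))) ≠ ⊤ := by
    rw [gt_T1' p n]; exact hfin1
  have hxfin2 : (∑' x : Fin n → ℕ, (∏ i, ENNReal.ofReal (p (x i))) *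
      ((∑' u : ℕ, if nOcc x u = 1 then 1 else 0) *
        (∑' v : ℕ, if nOcc x v = 0 then ENNReal.ofReal (p v) else 0))) ≠ ⊤ := by
    rw [gt_T2' p n]; exact hfin2
  have hxfin3 : (∑' x : Fin n → ℕ, (∏ i, ENNReal.ofReal (p (x i))) *
      ((∑' u : ℕ, if nOcc x u = 0 then ENNReal.ofReal (p u) else 0) *
        (∑' v : ℕ, if nOcc x v = 0 then ENNReal.ofReal (p v) else 0))) ≠ ⊤ := by
    rw [gt_T3' p n]; exact hfin3
  have hs1 := ENNReal.summable_toReal hxfin1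
  have hs2 := ENNReal.summable_toReal hxfin2
  have hs3 := ENNReal.summable_toReal hxfin3
  have hrisk : risk n p goodTuring
      = (1 / (n : ℝ) ^ 2) * (∑' u : ℕ, ∑' v : ℕ, (gtE1 p n u v).toReal)
        - (2 / (n : ℝ)) * (∑' u : ℕ, ∑' v : ℕ, (gtE2 p n u v).toReal)
        + (∑' u : ℕ, ∑' v : ℕ, (gtE3 p n u v).toReal) := by
    have hpt : ∀ x : Fin n → ℕ,
        sampleProb p x * (goodTuring x - missingMass p x) ^ 2
          = (1 / (n : ℝ) ^ 2) * ((∏ i, ENNReal.ofReal (p (x i))) *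
                ((∑' u : ℕ, if nOcc x u = 1 then 1 else 0) *
                  (∑' v : ℕ, if nOcc x v = 1 then 1 else 0))).toReal
            - (2 / (n : ℝ)) * ((∏ i, ENNReal.ofReal (p (x i))) *
                ((∑' u : ℕ, if nOcc x u = 1 then 1 else 0) *
                  (∑' v : ℕ, if nOcc x v = 0 then ENNReal.ofReal (p v) else 0))).toReal
            + ((∏ i, ENNReal.ofReal (p (x i))) *
                ((∑' u : ℕ, if nOcc x u = 0 then ENNReal.ofReal (p u) else 0) *
                  (∑' v : ℕ, if nOcc x v = 0 then ENNReal.ofReal (p v) else 0))).toReal := by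
      intro x
      rw [gt_sampleProb_toReal p hp0 x, goodTuring, gt_phi_toReal x,
        gt_missing_toReal p hp0 x,
        ENNReal.toReal_mul, ENNReal.toReal_mul, ENNReal.toReal_mul,
        ENNReal.toReal_mul, ENNReal.toReal_mul, ENNReal.toReal_mul]
      field_simp
      ring
    have e1 : (∑' x : Fin n → ℕ, ((∏ i, ENNReal.ofReal (p (x i))) *
          ((∑' u : ℕ, if nOcc x u = 1 then 1 else 0) *
            (∑' v : ℕ, if nOcc x v = 1 then 1 else 0))).toReal)
        = ∑' u : ℕ, ∑' v : ℕ, (gtE1 p n u v).toReal := by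
      rw [← ENNReal.tsum_toReal_eq (fun x => ne_top_of_le_ne_top hxfin1 (ENNReal.le_tsum x)),
        gt_T1' p n]
      exact hT1r
    have e2 : (∑' x : Fin n → ℕ, ((∏ i, ENNReal.ofReal (p (x i))) *
          ((∑' u : ℕ, if nOcc x u = 1 then 1 else 0) *
            (∑' v : ℕ, if nOcc x v = 0 then ENNReal.ofReal (p v) else 0))).toReal)
        = ∑' u : ℕ, ∑' v : ℕ, (gtE2 p n u v).toReal := by
      rw [← ENNReal.tsum_toReal_eq (fun x => ne_top_of_le_ne_top hxfin2 (ENNReal.le_tsum x)),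
        gt_T2' p n]
      exact hT2r
    have e3 : (∑' x : Fin n → ℕ, ((∏ i, ENNReal.ofReal (p (x i))) *
          ((∑' u : ℕ, if nOcc x u = 0 then ENNReal.ofReal (p u) else 0) *
            (∑' v : ℕ, if nOcc x v = 0 then ENNReal.ofReal (p v) else 0))).toReal)
        = ∑' u : ℕ, ∑' v : ℕ, (gtE3 p n u v).toReal := by
      rw [← ENNReal.tsum_toReal_eq (fun x => ne_top_of_le_ne_top hxfin3 (ENNReal.le_tsum x)),
        gt_T3' p n]
      exact hT3r
    rw [risk, expct, tsum_congr hpt,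
      Summable.tsum_add ((hs1.mul_left (1 / (n : ℝ) ^ 2)).sub (hs2.mul_left (2 / (n : ℝ)))) hs3,
      Summable.tsum_sub (hs1.mul_left (1 / (n : ℝ) ^ 2)) (hs2.mul_left (2 / (n : ℝ))),
      tsum_mul_left, tsum_mul_left, e1, e2, e3]
  rw [hrisk]
  have hcomb : (1 / (n : ℝ) ^ 2) * (∑' u : ℕ, ∑' v : ℕ, (gtE1 p n u v).toReal)
      - (2 / (n : ℝ)) * (∑' u : ℕ, ∑' v : ℕ, (gtE2 p n u v).toReal)
      + (∑' u : ℕ, ∑' v : ℕ, (gtE3 p n u v).toReal)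
      = ∑' u : ℕ, ∑' v : ℕ, gtG p n u v := by
    rw [← tsum_mul_left (a := 1 / (n : ℝ) ^ 2), ← tsum_mul_left (a := 2 / (n : ℝ)),
      ← Summable.tsum_sub (hS1o.mul_left (1 / (n : ℝ) ^ 2)) (hS2o.mul_left (2 / (n : ℝ))),
      ← Summable.tsum_add ((hS1o.mul_left (1 / (n : ℝ) ^ 2)).sub (hS2o.mul_left (2 / (n : ℝ)))) hS3o]
    refine tsum_congr fun u => ?_
    rw [← tsum_mul_left, ← tsum_mul_left,
      ← Summable.tsum_sub ((hS1i u).mul_left (1 / (n : ℝ) ^ 2)) ((hS2i u).mul_left (2 / (n : ℝ))),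
      ← Summable.tsum_add (((hS1i u).mul_left (1 / (n : ℝ) ^ 2)).sub ((hS2i u).mul_left (2 / (n : ℝ))))
        (hS3i u)]
    exact tsum_congr fun v => gt_combo_eq_G p hp0 hp1 n hn u v
  rw [hcomb]
  exact (gt_claim2 p hp0 hp1 n hn).symm
end
end

section
/- For every probability mass function p on ℕ and every integer n ≥ 2, E[Φ_1(X^n)·(Φ_1(X^n) − 1)] = n(n−1)·∑_{u,v∈ℕ, u≠v} p(u)p(v)(1−p(u)−p(v))^{n−2}, where the sum is over ordered pairs of distinct symbols. -/
open scoped BigOperators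

noncomputable section

lemma hasSum_pi_prod : ∀ {n : ℕ} (f : Fin n → ℕ → ℝ) (a : Fin n → ℝ),
    (∀ i b, 0 ≤ f i b) → (∀ i, HasSum (f i) (a i)) →
    HasSum (fun x : Fin n → ℕ => ∏ i, f i (x i)) (∏ i, a i) := by
  intro n
  induction n with
  | zero =>
      intro f a _ _
      have h := hasSum_single (f := fun _ : Fin 0 → ℕ => (1:ℝ)) default
        (fun b hb => absurd (Subsingleton.elim b default) hb)
      simpa using h
  | succ n ih =>
      intro f a hnn hf
      have htail := ih (fun i => f i.succ) (fun i => a i.succ)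
        (fun i b => hnn _ _) (fun i => hf _)
      have h1 : (0:ℕ → ℝ) ≤ f 0 := fun b => hnn 0 b
      have h2 : (0:(Fin n → ℕ) → ℝ) ≤ fun y : Fin n → ℕ => ∏ i, f i.succ (y i) :=
        fun y => Finset.prod_nonneg fun i _ => hnn _ _
      have hmul := Summable.mul_of_nonneg (hf 0).summable htail.summable h1 h2
      have hs := (hf 0).mul htail hmul
      rw [Fin.prod_univ_succ a]
      refine ((Fin.consEquiv fun _ => ℕ).hasSum_iff).mp ?_
      convert hs using 1
      · rfl
      funext q
      simp [Function.comp, Fin.prod_univ_succ, Fin.consEquiv]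

lemma pair_le_one (p : ℕ → ℝ) (hp : IsPMF p) {u v : ℕ} (huv : u ≠ v) : p u + p v ≤ 1 := by
  have h := sum_le_hasSum ({u, v} : Finset ℕ) (fun i _ => hp.1 i) hp.2
  rwa [Finset.sum_pair huv] at h

def gfun (p : ℕ → ℝ) (u v : ℕ) {n : ℕ} (i j k : Fin n) (a : ℕ) : ℝ :=
  if k = i then (if a = u then p u else 0)
  else if k = j then (if a = v then p v else 0)
  else if a = u ∨ a = v then 0 else p a

lemma gfun_nonneg (p : ℕ → ℝ) (hp : ∀ a, 0 ≤ p a) (u v : ℕ) {n : ℕ} (i j k : Fin n) (a : ℕ) :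
    0 ≤ gfun p u v i j k a := by
  unfold gfun; split_ifs <;> first | exact le_refl 0 | exact hp _

lemma gfun_hasSum (p : ℕ → ℝ) (hp : IsPMF p) {u v : ℕ} (huv : u ≠ v) {n : ℕ} (i j k : Fin n) :
    HasSum (gfun p u v i j k)
      (if k = i then p u else if k = j then p v else 1 - p u - p v) := by
  by_cases hki : k = i
  · have he : gfun p u v i j k = fun a => if a = u then p u else 0 := by
      funext a; simp [gfun, hki]
    rw [he, if_pos hki]
    exact hasSum_ite_eq u (p u)
  · by_cases hkj : k = j
    · have he : gfun p u v i j k = fun a => if a = v then p v else 0 := by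
        funext a; simp only [gfun]; rw [if_neg hki, if_pos hkj]
      rw [he, if_neg hki, if_pos hkj]
      exact hasSum_ite_eq v (p v)
    · have he : gfun p u v i j k = fun a => if a = u ∨ a = v then 0 else p a := by
        funext a; simp [gfun, hki, hkj]
      rw [he, if_neg hki, if_neg hkj]
      have h1 : HasSum (fun a => (if a = u then p u else 0) + (if a = v then p v else 0))
          (p u + p v) := (hasSum_ite_eq u (p u)).add (hasSum_ite_eq v (p v))
      have h2 := hp.2.sub h1
      have h3 : (fun a => p a - ((if a = u then p u else 0) + (if a = v then p v else 0)))
          = fun a => if a = u ∨ a = v then 0 else p a := by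
        funext a
        rcases eq_or_ne a u with hau | hau
        · subst hau; simp [huv]
        · rcases eq_or_ne a v with hav | hav
          · subst hav; simp [hau]
          · simp [hau, hav]
      rw [h3, ← sub_sub] at h2
      exact h2

lemma prod_s {n : ℕ} {i j : Fin n} (hij : i ≠ j) (A B q : ℝ) :
    (∏ k : Fin n, if k = i then A else if k = j then B else q) = A * B * q ^ (n - 2) := by
  have hsub : ({i, j} : Finset (Fin n)) ⊆ Finset.univ := Finset.subset_univ _
  rw [← Finset.prod_sdiff hsub, Finset.prod_pair hij]
  have h1 : (∏ k ∈ Finset.univ \ {i, j}, if k = i then A else if k = j then B else q)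
      = q ^ (n - 2) := by
    rw [Finset.prod_congr rfl (fun k hk => ?_), Finset.prod_const]
    · congr 1
      rw [Finset.card_sdiff_of_subset hsub, Finset.card_pair hij, Finset.card_univ, Fintype.card_fin]
    · simp only [Finset.mem_sdiff, Finset.mem_insert, Finset.mem_singleton] at hk
      rw [if_neg (fun h => hk.2 (Or.inl h)), if_neg (fun h => hk.2 (Or.inr h))]
  rw [h1, if_pos rfl, if_neg (Ne.symm hij), if_pos rfl]
  ring

lemma pointwise_eq (p : ℕ → ℝ) {n : ℕ} {u v : ℕ} (huv : u ≠ v) (x : Fin n → ℕ) :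
    sampleProb p x * (if nOcc x u = 1 ∧ nOcc x v = 1 then (1:ℝ) else 0)
      = ∑ ij ∈ (Finset.univ : Finset (Fin n)).offDiag, ∏ k, gfun p u v ij.1 ij.2 k (x k) := by
  by_cases h : nOcc x u = 1 ∧ nOcc x v = 1
  · obtain ⟨i, hi⟩ := Finset.card_eq_one.mp h.1
    obtain ⟨j, hj⟩ := Finset.card_eq_one.mp h.2
    have hxi : x i = u := by
      have hmem : i ∈ Finset.univ.filter fun k => x k = u := hi ▸ Finset.mem_singleton_self i
      exact (Finset.mem_filter.mp hmem).2
    have hxj : x j = v := by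
      have hmem : j ∈ Finset.univ.filter fun k => x k = v := hj ▸ Finset.mem_singleton_self j
      exact (Finset.mem_filter.mp hmem).2
    have hxiu : ∀ k, x k = u → k = i := by
      intro k hk
      have hmem : k ∈ Finset.univ.filter fun k => x k = u :=
        Finset.mem_filter.mpr ⟨Finset.mem_univ _, hk⟩
      rw [hi] at hmem; exact Finset.mem_singleton.mp hmem
    have hxjv : ∀ k, x k = v → k = j := by
      intro k hk
      have hmem : k ∈ Finset.univ.filter fun k => x k = v :=
        Finset.mem_filter.mpr ⟨Finset.mem_univ _, hk⟩
      rw [hj] at hmem; exact Finset.mem_singleton.mp hmem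
    have hij : i ≠ j := by
      intro e; apply huv; rw [← hxi, ← hxj, e]
    rw [if_pos h, mul_one]
    rw [Finset.sum_eq_single_of_mem (i, j)
      (Finset.mem_offDiag.mpr ⟨Finset.mem_univ _, Finset.mem_univ _, hij⟩)]
    · unfold sampleProb
      refine (Finset.prod_congr rfl fun k _ => ?_).symm
      simp only [gfun]
      by_cases hki : k = i
      · rw [if_pos hki, hki, if_pos hxi, hxi]
      · rw [if_neg hki]
        by_cases hkj : k = j
        · rw [if_pos hkj, hkj, if_pos hxj, hxj]
        · have hku : ¬x k = u := fun e => hki (hxiu k e)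
          have hkv : ¬x k = v := fun e => hkj (hxjv k e)
          rw [if_neg hkj, if_neg (by tauto)]
    · intro b hb hne
      obtain ⟨-, -, hbne⟩ := Finset.mem_offDiag.mp hb
      by_cases h1 : x b.1 = u
      · by_cases h2 : x b.2 = v
        · exact absurd (Prod.ext (hxiu _ h1) (hxjv _ h2)) hne
        · refine Finset.prod_eq_zero (Finset.mem_univ b.2) ?_
          simp only [gfun]
          rw [if_neg (Ne.symm hbne), if_true, if_neg h2]
      · refine Finset.prod_eq_zero (Finset.mem_univ b.1) ?_
        simp only [gfun]
        rw [if_true, if_neg h1]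
  · rw [if_neg h, mul_zero]
    refine (Finset.sum_eq_zero fun b hb => ?_).symm
    obtain ⟨-, -, hbne⟩ := Finset.mem_offDiag.mp hb
    by_contra hprod
    have hfac : ∀ k : Fin n, gfun p u v b.1 b.2 k (x k) ≠ 0 :=
      fun k hk => hprod (Finset.prod_eq_zero (Finset.mem_univ k) hk)
    have h1 : x b.1 = u := by
      have hf := hfac b.1
      simp only [gfun, if_pos rfl] at hf
      by_contra e; rw [if_neg e] at hf; exact hf rfl
    have h2 : x b.2 = v := by
      have hf := hfac b.2
      simp only [gfun] at hf
      rw [if_neg (Ne.symm hbne), if_true] at hf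
      by_contra e; rw [if_neg e] at hf; exact hf rfl
    have hothers : ∀ k : Fin n, k ≠ b.1 → k ≠ b.2 → ¬x k = u ∧ ¬x k = v := by
      intro k hk1 hk2
      have hf := hfac k
      simp only [gfun] at hf
      rw [if_neg hk1, if_neg hk2] at hf
      by_contra hc
      rw [if_pos (by tauto)] at hf
      exact hf rfl
    apply h
    constructor
    · rw [nOcc, Finset.card_eq_one]
      refine ⟨b.1, ?_⟩
      ext k
      simp only [Finset.mem_filter, Finset.mem_univ, true_and, Finset.mem_singleton]
      constructor
      · intro hk
        by_contra hkne
        by_cases hk2 : k = b.2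
        · exact huv (by rw [← hk, hk2, h2])
        · exact (hothers k hkne hk2).1 hk
      · intro e; rw [e]; exact h1
    · rw [nOcc, Finset.card_eq_one]
      refine ⟨b.2, ?_⟩
      ext k
      simp only [Finset.mem_filter, Finset.mem_univ, true_and, Finset.mem_singleton]
      constructor
      · intro hk
        by_contra hkne
        by_cases hk1 : k = b.1
        · exact huv (by rw [← hk, hk1, h1])
        · exact (hothers k hk1 hkne).2 hk
      · intro e; rw [e]; exact h2

lemma hasSum_pairProb (p : ℕ → ℝ) (hp : IsPMF p) {n : ℕ} {u v : ℕ} (huv : u ≠ v) :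
    HasSum (fun x : Fin n → ℕ =>
        sampleProb p x * (if nOcc x u = 1 ∧ nOcc x v = 1 then (1:ℝ) else 0))
      (((Finset.univ : Finset (Fin n)).offDiag.card : ℝ) *
        (p u * p v * (1 - p u - p v) ^ (n - 2))) := by
  have hterm : ∀ ij ∈ (Finset.univ : Finset (Fin n)).offDiag,
      HasSum (fun x : Fin n → ℕ => ∏ k, gfun p u v ij.1 ij.2 k (x k))
        (p u * p v * (1 - p u - p v) ^ (n - 2)) := by
    intro ij hij
    have hij' : ij.1 ≠ ij.2 := (Finset.mem_offDiag.mp hij).2.2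
    have h := hasSum_pi_prod (fun k => gfun p u v ij.1 ij.2 k)
      (fun k => if k = ij.1 then p u else if k = ij.2 then p v else 1 - p u - p v)
      (fun i b => gfun_nonneg p hp.1 u v _ _ _ _)
      (fun k => gfun_hasSum p hp huv _ _ _)
    rwa [prod_s hij'] at h
  have hsum := hasSum_sum hterm
  rw [Finset.sum_const, nsmul_eq_mul] at hsum
  convert hsum using 1
  funext x
  exact pointwise_eq p huv x

lemma hasSum_phi {n : ℕ} (x : Fin n → ℕ) :
    HasSum (fun uv : ℕ × ℕ =>
        if uv.1 ≠ uv.2 ∧ nOcc x uv.1 = 1 ∧ nOcc x uv.2 = 1 then (1:ℝ) else 0)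
      ((phi 1 x : ℝ) * ((phi 1 x : ℝ) - 1)) := by
  set S := (Finset.univ.image x).filter fun u => nOcc x u = 1 with hS
  have hmem : ∀ u, nOcc x u = 1 → u ∈ S := by
    intro u hu
    refine Finset.mem_filter.mpr ⟨?_, hu⟩
    have hpos : (Finset.univ.filter fun i => x i = u).Nonempty := by
      rw [← Finset.card_pos, show (Finset.univ.filter fun i => x i = u).card = nOcc x u from rfl,
        hu]
      exact one_pos
    obtain ⟨i, hi⟩ := hpos
    exact Finset.mem_image.mpr ⟨i, Finset.mem_univ i, (Finset.mem_filter.mp hi).2⟩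
  have hzero : ∀ uv : ℕ × ℕ, uv ∉ S.offDiag →
      (if uv.1 ≠ uv.2 ∧ nOcc x uv.1 = 1 ∧ nOcc x uv.2 = 1 then (1:ℝ) else 0) = 0 := by
    intro uv huv
    rw [if_neg]
    rintro ⟨h1, h2, h3⟩
    exact huv (Finset.mem_offDiag.mpr ⟨hmem _ h2, hmem _ h3, h1⟩)
  have h := hasSum_sum_of_ne_finset_zero (L := SummationFilter.unconditional _) hzero
  have hval : (∑ uv ∈ S.offDiag,
      if uv.1 ≠ uv.2 ∧ nOcc x uv.1 = 1 ∧ nOcc x uv.2 = 1 then (1:ℝ) else 0)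
      = (S.offDiag.card : ℝ) := by
    rw [Finset.sum_congr rfl (fun uv huv => ?_), Finset.sum_const, nsmul_eq_mul, mul_one]
    obtain ⟨hm1, hm2, hm3⟩ := Finset.mem_offDiag.mp huv
    exact if_pos ⟨hm3, (Finset.mem_filter.mp hm1).2, (Finset.mem_filter.mp hm2).2⟩
  rw [hval] at h
  have hcard : (S.offDiag.card : ℝ) = (phi 1 x : ℝ) * ((phi 1 x : ℝ) - 1) := by
    have hphi : phi 1 x = S.card := rfl
    have hle : S.card ≤ S.card * S.card := by
      rcases Nat.eq_zero_or_pos S.card with h0 | h0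
      · rw [h0]
      · exact Nat.le_mul_of_pos_left _ h0
    rw [Finset.offDiag_card, hphi, Nat.cast_sub hle]
    push_cast
    ring
  rwa [hcard] at h

/-- **Second factorial moment of `Φ₁`** (equation (14)).
For every pmf `p` on `ℕ` and every `n ≥ 2`,
`E[Φ₁(X^n)(Φ₁(X^n) - 1)] = n(n-1) ∑_{u ≠ v} p(u)p(v)(1-p(u)-p(v))^{n-2}`,
the sum running over ordered pairs of distinct symbols. -/
theorem expected_phi_one_factorial_moment
    (p : ℕ → ℝ) (hp : IsPMF p) (n : ℕ) (hn : 2 ≤ n) :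
    expct n p (fun x => (phi 1 x : ℝ) * ((phi 1 x : ℝ) - 1)) =
      (n : ℝ) * ((n : ℝ) - 1) *
        ∑' u : ℕ, ∑' v : ℕ,
          if u ≠ v then p u * p v * (1 - p u - p v) ^ (n - 2) else 0 := by
  classical
  set K : ℝ := ((Finset.univ : Finset (Fin n)).offDiag.card : ℝ) with hKdef
  set F : ℕ × ℕ → (Fin n → ℕ) → ℝ := fun uv x =>
    sampleProb p x *
      (if uv.1 ≠ uv.2 ∧ nOcc x uv.1 = 1 ∧ nOcc x uv.2 = 1 then (1:ℝ) else 0) with hF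
  have hsp : ∀ x : Fin n → ℕ, 0 ≤ sampleProb p x :=
    fun x => Finset.prod_nonneg fun i _ => hp.1 _
  set c : ℕ × ℕ → ℝ := fun uv =>
    if uv.1 ≠ uv.2 then K * (p uv.1 * p uv.2 * (1 - p uv.1 - p uv.2) ^ (n - 2)) else 0
    with hc
  have hC : ∀ uv : ℕ × ℕ, HasSum (F uv) (c uv) := by
    intro uv
    by_cases huv : uv.1 ≠ uv.2
    · have h := hasSum_pairProb p hp (n := n) huv
      have he : F uv = fun x : Fin n → ℕ =>
          sampleProb p x * (if nOcc x uv.1 = 1 ∧ nOcc x uv.2 = 1 then (1:ℝ) else 0) := by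
        funext x; simp [hF, huv]
      simp only [hc]
      rw [if_pos huv, he]
      exact h
    · have he : F uv = fun _ => (0:ℝ) := by
        funext x; simp [hF, huv]
      simp only [hc]
      rw [if_neg huv, he]
      exact hasSum_zero
  have hKnn : 0 ≤ K := Nat.cast_nonneg _
  have hcle : ∀ uv : ℕ × ℕ, c uv ≤ K * (p uv.1 * p uv.2) := by
    intro uv
    simp only [hc]
    by_cases huv : uv.1 ≠ uv.2
    · rw [if_pos huv]
      refine mul_le_mul_of_nonneg_left ?_ hKnn
      have hq0 : 0 ≤ 1 - p uv.1 - p uv.2 := by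
        have := pair_le_one p hp huv; linarith
      have hq1 : 1 - p uv.1 - p uv.2 ≤ 1 := by
        have := hp.1 uv.1; have := hp.1 uv.2; linarith
      calc p uv.1 * p uv.2 * (1 - p uv.1 - p uv.2) ^ (n - 2)
          ≤ p uv.1 * p uv.2 * 1 :=
            mul_le_mul_of_nonneg_left (pow_le_one₀ hq0 hq1)
              (mul_nonneg (hp.1 _) (hp.1 _))
        _ = p uv.1 * p uv.2 := mul_one _
    · rw [if_neg huv]
      exact mul_nonneg hKnn (mul_nonneg (hp.1 _) (hp.1 _))
  have hcnn : ∀ uv : ℕ × ℕ, 0 ≤ c uv := by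
    intro uv
    simp only [hc]
    by_cases huv : uv.1 ≠ uv.2
    · rw [if_pos huv]
      have hq0 : 0 ≤ 1 - p uv.1 - p uv.2 := by
        have := pair_le_one p hp huv; linarith
      exact mul_nonneg hKnn (mul_nonneg (mul_nonneg (hp.1 _) (hp.1 _)) (pow_nonneg hq0 _))
    · rw [if_neg huv]
  have hpsum : Summable p := hp.2.summable
  have hppsum : Summable (fun uv : ℕ × ℕ => p uv.1 * p uv.2) :=
    Summable.mul_of_nonneg hpsum hpsum hp.1 hp.1
  have hcsum : Summable c :=
    Summable.of_nonneg_of_le hcnn hcle (hppsum.mul_left K)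
  have hFnn : (0 : (ℕ × ℕ) × (Fin n → ℕ) → ℝ) ≤ Function.uncurry F := by
    intro q
    refine mul_nonneg (hsp _) ?_
    split_ifs <;> norm_num
  have hFsum : Summable (Function.uncurry F) := by
    rw [summable_prod_of_nonneg hFnn]
    refine ⟨fun uv => (hC uv).summable, ?_⟩
    refine hcsum.congr fun uv => ?_
    exact ((hC uv).tsum_eq).symm
  have hx : ∀ x : Fin n → ℕ, HasSum (fun uv : ℕ × ℕ => F uv x)
      (sampleProb p x * ((phi 1 x : ℝ) * ((phi 1 x : ℝ) - 1))) :=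
    fun x => (hasSum_phi x).mul_left _
  have step1 : expct n p (fun x => (phi 1 x : ℝ) * ((phi 1 x : ℝ) - 1))
      = ∑' x : Fin n → ℕ, ∑' uv : ℕ × ℕ, F uv x :=
    tsum_congr fun x => ((hx x).tsum_eq).symm
  have step2 : (∑' x : Fin n → ℕ, ∑' uv : ℕ × ℕ, F uv x)
      = ∑' uv : ℕ × ℕ, ∑' x : Fin n → ℕ, F uv x :=
    Summable.tsum_comm' hFsum (fun uv => (hC uv).summable) (fun x => (hx x).summable)
  have step3 : (∑' uv : ℕ × ℕ, ∑' x : Fin n → ℕ, F uv x) = ∑' uv : ℕ × ℕ, c uv :=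
    tsum_congr fun uv => (hC uv).tsum_eq
  have step4 : (∑' uv : ℕ × ℕ, c uv) = ∑' u : ℕ, ∑' v : ℕ, c (u, v) :=
    Summable.tsum_prod' hcsum fun u => ((summable_prod_of_nonneg fun uv => hcnn uv).mp hcsum).1 u
  have hK : K = (n : ℝ) * ((n : ℝ) - 1) := by
    have hle : n ≤ n * n := by
      rcases Nat.eq_zero_or_pos n with h0 | h0
      · rw [h0]
      · exact Nat.le_mul_of_pos_left _ h0
    rw [hKdef, Finset.offDiag_card, Finset.card_univ, Fintype.card_fin, Nat.cast_sub hle]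
    push_cast
    ring
  have step5 : (∑' u : ℕ, ∑' v : ℕ, c (u, v))
      = (n : ℝ) * ((n : ℝ) - 1) *
        ∑' u : ℕ, ∑' v : ℕ,
          if u ≠ v then p u * p v * (1 - p u - p v) ^ (n - 2) else 0 := by
    have hpt : ∀ u v : ℕ, c (u, v)
        = (n : ℝ) * ((n : ℝ) - 1) *
          (if u ≠ v then p u * p v * (1 - p u - p v) ^ (n - 2) else 0) := by
      intro u v
      simp only [hc]
      rw [hK]
      by_cases huv : u ≠ v
      · simp [huv]
      · simp [huv]
    calc (∑' u : ℕ, ∑' v : ℕ, c (u, v))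
        = ∑' u : ℕ, ∑' v : ℕ, (n : ℝ) * ((n : ℝ) - 1) *
            (if u ≠ v then p u * p v * (1 - p u - p v) ^ (n - 2) else 0) := by
          exact tsum_congr fun u => tsum_congr fun v => hpt u v
      _ = ∑' u : ℕ, (n : ℝ) * ((n : ℝ) - 1) *
            ∑' v : ℕ, (if u ≠ v then p u * p v * (1 - p u - p v) ^ (n - 2) else 0) := by
          exact tsum_congr fun u => tsum_mul_left
      _ = _ := tsum_mul_left
  rw [step1, step2, step3, step4, step5]
end
end

section
/- For every probability mass function p on ℕ and every integer n ≥ 0, ∑_{u∈ℕ} n·p(u)²(1−p(u))^n ≤ e^{−1}. -/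
open scoped BigOperators

lemma aux_t_exp : ∀ t : ℝ, 0 ≤ t → t * Real.exp (-t) ≤ Real.exp (-1) := by
  intro t ht
  have h : t ≤ Real.exp (t - 1) := by
    have := Real.add_one_le_exp (t - 1)
    linarith
  calc t * Real.exp (-t) ≤ Real.exp (t - 1) * Real.exp (-t) := by
        apply mul_le_mul_of_nonneg_right h (Real.exp_nonneg _)
    _ = Real.exp (-1) := by rw [← Real.exp_add]; ring_nf

/-- **Bound (12) of the paper.**
For every probability mass function `p` on `ℕ` and every integer `n ≥ 0`,
`∑_u n p(u)² (1-p(u))^n ≤ e⁻¹`. -/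
theorem sum_n_p_sq_le_exp_neg_one
    (p : ℕ → ℝ) (hp_nonneg : ∀ u, 0 ≤ p u) (hp_sum : HasSum p 1) (n : ℕ) :
    ∑' u : ℕ, (n : ℝ) * p u ^ 2 * (1 - p u) ^ n ≤ Real.exp (-1) := by
  have hle1 : ∀ u, p u ≤ 1 := fun u => le_hasSum hp_sum u (fun i _ => hp_nonneg i)
  have key : ∀ u, (n : ℝ) * p u ^ 2 * (1 - p u) ^ n ≤ p u * Real.exp (-1) := by
    intro u
    have h1 : (0:ℝ) ≤ 1 - p u := by linarith [hle1 u]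
    have h2 : (1 - p u) ^ n ≤ Real.exp (-(n * p u)) := by
      calc (1 - p u) ^ n ≤ (Real.exp (-(p u))) ^ n := by
            apply pow_le_pow_left₀ h1
            have := Real.add_one_le_exp (-(p u)); linarith
        _ = Real.exp (-(n * p u)) := by
            rw [← Real.exp_nat_mul]; ring_nf
    have h3 : (n : ℝ) * p u * (1 - p u) ^ n ≤ Real.exp (-1) := by
      calc (n : ℝ) * p u * (1 - p u) ^ n ≤ (n * p u) * Real.exp (-(n * p u)) := by
            apply mul_le_mul_of_nonneg_left h2
            exact mul_nonneg (Nat.cast_nonneg n) (hp_nonneg u)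
        _ ≤ Real.exp (-1) := aux_t_exp _ (mul_nonneg (Nat.cast_nonneg n) (hp_nonneg u))
    calc (n : ℝ) * p u ^ 2 * (1 - p u) ^ n
        = p u * ((n : ℝ) * p u * (1 - p u) ^ n) := by ring
      _ ≤ p u * Real.exp (-1) := mul_le_mul_of_nonneg_left h3 (hp_nonneg u)
  have hsum2 : Summable fun u => p u * Real.exp (-1) :=
    hp_sum.summable.mul_right _
  have hsum1 : Summable fun u => (n : ℝ) * p u ^ 2 * (1 - p u) ^ n := by
    apply Summable.of_nonneg_of_le (fun u => ?_) key hsum2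
    have h1 : (0:ℝ) ≤ 1 - p u := by linarith [hle1 u]
    positivity
  calc ∑' u, (n : ℝ) * p u ^ 2 * (1 - p u) ^ n
      ≤ ∑' u, p u * Real.exp (-1) := Summable.tsum_le_tsum key hsum1 hsum2
    _ = Real.exp (-1) := by
        rw [tsum_mul_right, hp_sum.tsum_eq, one_mul]
end

section
/- For every probability mass function p on ℕ and every integer n ≥ 2, the sum over ordered pairs of distinct symbols ∑_{u,v∈ℕ, u≠v} p(u)p(v)(1−p(u)−p(v))^{n−2}·(p(u)+p(v))² is at most 6/(n(n−1)). -/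
open scoped BigOperators

lemma key_poly_bound {q : ℝ} (hq0 : 0 ≤ q) (hq1 : q ≤ 1) {n : ℕ} (hn : 2 ≤ n) :
    q ^ 2 * (1 - q) ^ (n - 2) ≤ 2 / ((n : ℝ) * ((n : ℝ) - 1)) := by
  have h1q : 0 ≤ 1 - q := by linarith
  have hn2 : (2 : ℝ) ≤ (n : ℝ) := by exact_mod_cast hn
  have hden : 0 < (n : ℝ) * ((n : ℝ) - 1) := by nlinarith
  have hsum : (∑ k ∈ Finset.range (n + 1),
      q ^ k * (1 - q) ^ (n - k) * (n.choose k : ℝ)) = 1 := by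
    rw [← add_pow]; norm_num
  have hbin : q ^ 2 * (1 - q) ^ (n - 2) * (n.choose 2 : ℝ) ≤ 1 := by
    calc q ^ 2 * (1 - q) ^ (n - 2) * (n.choose 2 : ℝ)
        ≤ ∑ k ∈ Finset.range (n + 1), q ^ k * (1 - q) ^ (n - k) * (n.choose k : ℝ) :=
          Finset.single_le_sum (f := fun k => q ^ k * (1 - q) ^ (n - k) * (n.choose k : ℝ))
            (fun i _ => by positivity)
            (show (2:ℕ) ∈ Finset.range (n+1) from Finset.mem_range.mpr (by omega))
      _ = 1 := hsum
  have hcast : (n.choose 2 : ℝ) = (n : ℝ) * ((n : ℝ) - 1) / 2 :=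
    Nat.cast_choose_two (K := ℝ) n
  rw [hcast] at hbin
  rw [div_eq_mul_inv, ← le_div_iff₀ (by positivity)] at hbin
  calc q ^ 2 * (1 - q) ^ (n - 2) ≤ 1 / ((n : ℝ) * ((n : ℝ) - 1) / 2) := hbin
    _ = 2 / ((n : ℝ) * ((n : ℝ) - 1)) := by
        field_simp
    _ ≤ 2 / ((n : ℝ) * ((n : ℝ) - 1)) := le_refl _

/-- **Bound (8) of the paper.**
For every probability mass function `p` on `ℕ` and every integer `n ≥ 2`,
the sum over ordered pairs of distinct symbols
`∑_{u ≠ v} p(u)p(v)(1-p(u)-p(v))^{n-2} (p(u)+p(v))² ≤ 6/(n(n-1))`. -/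
theorem bivariate_weighted_sum_bound
    (p : ℕ → ℝ) (hp_nonneg : ∀ u, 0 ≤ p u) (hp_sum : HasSum p 1)
    (n : ℕ) (hn : 2 ≤ n) :
    (∑' u : ℕ, ∑' v : ℕ,
        if u ≠ v then
          p u * p v * (1 - p u - p v) ^ (n - 2) * (p u + p v) ^ 2
        else 0) ≤
      6 / ((n : ℝ) * ((n : ℝ) - 1)) := by
  have hps : Summable p := hp_sum.summable
  set c : ℝ := 2 / ((n : ℝ) * ((n : ℝ) - 1)) with hc
  have hn2 : (2 : ℝ) ≤ (n : ℝ) := by exact_mod_cast hn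
  have hden : 0 < (n : ℝ) * ((n : ℝ) - 1) := by nlinarith
  have hc0 : 0 ≤ c := by positivity
  set f : ℕ → ℕ → ℝ := fun u v =>
    if u ≠ v then p u * p v * (1 - p u - p v) ^ (n - 2) * (p u + p v) ^ 2 else 0
    with hf
  have hq1 : ∀ u v, u ≠ v → p u + p v ≤ 1 := by
    intro u v h
    have hle := Summable.sum_le_tsum ({u, v} : Finset ℕ)
      (fun i _ => hp_nonneg i) hps
    rw [hp_sum.tsum_eq, Finset.sum_pair h] at hle
    exact hle
  have hterm0 : ∀ u v, 0 ≤ f u v := by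
    intro u v
    by_cases h : u = v
    · simp [hf, h]
    · simp only [hf, if_pos h]
      have h1 : p u + p v ≤ 1 := hq1 u v h
      have h1' : 0 ≤ 1 - p u - p v := by linarith
      have := hp_nonneg u; have := hp_nonneg v
      positivity
  have hterm : ∀ u v, f u v ≤ p u * p v * c := by
    intro u v
    by_cases h : u = v
    · simp only [hf, h, ne_eq, not_true_eq_false, if_false]
      have := hp_nonneg u; have := hp_nonneg v
      positivity
    · simp only [hf, if_pos h]
      have hkey := key_poly_bound (q := p u + p v)
        (by have := hp_nonneg u; have := hp_nonneg v; positivity) (hq1 u v h) hn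
      have hpuv : 0 ≤ p u * p v := mul_nonneg (hp_nonneg u) (hp_nonneg v)
      calc p u * p v * (1 - p u - p v) ^ (n - 2) * (p u + p v) ^ 2
          = p u * p v * ((p u + p v) ^ 2 * (1 - (p u + p v)) ^ (n - 2)) := by
            rw [show (1 - p u - p v) = 1 - (p u + p v) by ring]; ring
        _ ≤ p u * p v * c := mul_le_mul_of_nonneg_left hkey hpuv
  have hg : ∀ u, HasSum (fun v => p u * p v * c) (p u * c) := by
    intro u
    have := (hp_sum.mul_left (p u)).mul_right c
    simpa using this
  have hfsum : ∀ u, Summable (fun v => f u v) := fun u =>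
    Summable.of_nonneg_of_le (hterm0 u) (hterm u) (hg u).summable
  have hinner : ∀ u, (∑' v, f u v) ≤ p u * c := by
    intro u
    calc (∑' v, f u v) ≤ ∑' v, p u * p v * c :=
          Summable.tsum_le_tsum (hterm u) (hfsum u) (hg u).summable
      _ = p u * c := (hg u).tsum_eq
  have hinner0 : ∀ u, 0 ≤ ∑' v, f u v := fun u => tsum_nonneg (hterm0 u)
  have hG : HasSum (fun u => p u * c) c := by
    have := hp_sum.mul_right c
    simpa using this
  have hFsum : Summable (fun u => ∑' v, f u v) :=
    Summable.of_nonneg_of_le hinner0 hinner hG.summable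
  have hmain : (∑' u, ∑' v, f u v) ≤ c := by
    calc (∑' u, ∑' v, f u v) ≤ ∑' u, p u * c :=
          Summable.tsum_le_tsum hinner hFsum hG.summable
      _ = c := hG.tsum_eq
  calc (∑' u : ℕ, ∑' v : ℕ,
        if u ≠ v then
          p u * p v * (1 - p u - p v) ^ (n - 2) * (p u + p v) ^ 2
        else 0) = ∑' u, ∑' v, f u v := rfl
    _ ≤ c := hmain
    _ ≤ 6 / ((n : ℝ) * ((n : ℝ) - 1)) := by
        rw [hc]
        gcongr
        norm_num
end

section
/- Fix an integer k ≥ 1 and let 𝒫_c be the set of probability mass functions p_c on the alphabet {0, 1, …, k} such that p_c(0) ≥ 1/2 and p_c(i) = (1 − p_c(0))/k for all 1 ≤ i ≤ k. Then the minimax squared-error risk for estimating p_c(0) from n i.i.d. samples satisfies liminf_{n→∞} n·inf_{p̂} sup_{p_c ∈ 𝒫_c} E_{X^n ∼ p_c^{⊗n}}[(p_c(0) − p̂(X^n))²] ≥ 1/4, where the infimum is over all estimators p̂ : {0,…,k}^n → [0,1]. -/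
open scoped BigOperators

noncomputable section
set_option maxHeartbeats 1000000

/-- `q` belongs to the class `𝒫_c` of pmfs on the alphabet `{0, 1, …, k}` with
`q(0) ≥ 1/2` and `q(i) = (1 - q(0))/k` for all `1 ≤ i ≤ k`. -/
def MemPc (k : ℕ) (q : Fin (k + 1) → ℝ) : Prop :=
  (∀ u, 0 ≤ q u) ∧ (∑ u, q u) = 1 ∧ 1 / 2 ≤ q 0 ∧
    ∀ i : Fin (k + 1), i ≠ 0 → q i = (1 - q 0) / k

/-- The minimax squared-error risk, with `n` samples, for estimating `q(0)` over the
class `𝒫_c`; the infimum is over all estimators `p̂ : {0,…,k}^n → [0,1]`. -/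
def minimaxPc (k n : ℕ) : ℝ :=
  sInf {r : ℝ | ∃ phat : (Fin n → Fin (k + 1)) → ℝ,
    (∀ x, phat x ∈ Set.Icc (0 : ℝ) 1) ∧
    r = sSup {s : ℝ | ∃ q : Fin (k + 1) → ℝ, MemPc k q ∧
          s = ∑ x : Fin n → Fin (k + 1), (∏ i, q (x i)) * (q 0 - phat x) ^ 2}}

namespace MinimaxAux

/-- the symmetric pmf with `q 0 = θ`. -/
def qf (k : ℕ) (θ : ℝ) : Fin (k + 1) → ℝ := fun u => if u = 0 then θ else (1 - θ) / k

lemma qf_zero (k : ℕ) (θ : ℝ) : qf k θ 0 = θ := by simp [qf]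

lemma sum_qf (k : ℕ) (hk : 1 ≤ k) (θ : ℝ) : ∑ u, qf k θ u = 1 := by
  rw [Fin.sum_univ_succ]
  have : ∀ i : Fin k, qf k θ i.succ = (1 - θ) / k := by
    intro i; simp [qf, Fin.succ_ne_zero]
  rw [Finset.sum_congr rfl fun i _ => this i, Finset.sum_const, qf_zero]
  have hk0 : (k : ℝ) ≠ 0 := Nat.cast_ne_zero.mpr (by omega)
  simp only [Finset.card_univ, Fintype.card_fin, nsmul_eq_mul]
  field_simp
  ring

lemma qf_memPc (k : ℕ) (hk : 1 ≤ k) {θ : ℝ} (h1 : 1 / 2 ≤ θ) (h2 : θ ≤ 1) :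
    MemPc k (qf k θ) := by
  have hk0 : (0:ℝ) < (k : ℝ) := by positivity
  refine ⟨?_, sum_qf k hk θ, by simpa [qf_zero] using h1, ?_⟩
  · intro u
    by_cases h : u = 0
    · simp only [qf, h, if_true]; linarith
    · simp only [qf, h, if_false]; exact div_nonneg (by linarith) hk0.le
  · intro i hi; simp [qf, hi, qf_zero]

lemma qf_pos (k : ℕ) (hk : 1 ≤ k) {θ : ℝ} (h1 : 1 / 2 ≤ θ) (h2 : θ < 1) (u : Fin (k+1)) :
    0 < qf k θ u := by
  have hk0 : (0:ℝ) < (k : ℝ) := by positivity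
  by_cases h : u = 0
  · simp only [qf, h, if_true]; linarith
  · simp only [qf, h, if_false]; exact div_pos (by linarith) hk0

section pmf

variable {k n : ℕ} {q : Fin (k + 1) → ℝ}

lemma sum_prod_eq_pow (f : Fin (k + 1) → ℝ) :
    ∑ x : Fin n → Fin (k + 1), ∏ i, f (x i) = (∑ u, f u) ^ n :=
  (Fintype.sum_pow f n).symm

lemma sum_P (hq1 : ∑ u, q u = 1) :
    ∑ x : Fin n → Fin (k + 1), ∏ i, q (x i) = 1 := by
  rw [sum_prod_eq_pow, hq1, one_pow]

lemma P_nonneg (hq0 : ∀ u, 0 ≤ q u) (x : Fin n → Fin (k + 1)) :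
    0 ≤ ∏ i, q (x i) :=
  Finset.prod_nonneg fun i _ => hq0 (x i)

lemma P_pos (hq0 : ∀ u, 0 < q u) (x : Fin n → Fin (k + 1)) :
    0 < ∏ i, q (x i) :=
  Finset.prod_pos fun i _ => hq0 (x i)

end pmf



section CS
variable {Ω : Type*} [Fintype Ω]


variable {Ω : Type*} [Fintype Ω]

/-- Jensen: squared bias is at most the risk. -/
lemma jensen (P : Ω → ℝ) (hP : ∀ x, 0 ≤ P x) (hPs : ∑ x, P x = 1) (f : Ω → ℝ) (θ : ℝ) :
    (∑ x, P x * f x - θ) ^ 2 ≤ ∑ x, P x * (f x - θ) ^ 2 := by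
  have key : (∑ x, P x * f x - θ) = ∑ x, Real.sqrt (P x) * (Real.sqrt (P x) * (f x - θ)) := by
    have : ∀ x : Ω, Real.sqrt (P x) * (Real.sqrt (P x) * (f x - θ)) = P x * (f x - θ) := by
      intro x
      rw [← mul_assoc, Real.mul_self_sqrt (hP x)]
    rw [Finset.sum_congr rfl fun x _ => this x]
    rw [Finset.sum_congr rfl fun x _ => mul_sub (P x) (f x) θ, Finset.sum_sub_distrib,
      ← Finset.sum_mul, hPs, one_mul]
  rw [key]
  calc (∑ x, Real.sqrt (P x) * (Real.sqrt (P x) * (f x - θ))) ^ 2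
      ≤ (∑ x, Real.sqrt (P x) ^ 2) * ∑ x, (Real.sqrt (P x) * (f x - θ)) ^ 2 :=
        Finset.sum_mul_sq_le_sq_mul_sq _ _ _
    _ = ∑ x, P x * (f x - θ) ^ 2 := by
        have h1 : ∀ x : Ω, Real.sqrt (P x) ^ 2 = P x := fun x => Real.sq_sqrt (hP x)
        have h2 : ∀ x : Ω, (Real.sqrt (P x) * (f x - θ)) ^ 2 = P x * (f x - θ) ^ 2 := by
          intro x; rw [mul_pow, h1]
        rw [Finset.sum_congr rfl fun x _ => h1 x, Finset.sum_congr rfl fun x _ => h2 x, hPs,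
          one_mul]

/-- Chapman–Robbins style two-point inequality. -/
lemma chapman (P P' : Ω → ℝ) (hP : ∀ x, 0 < P x) (hPs : ∑ x, P x = 1) (hPs' : ∑ x, P' x = 1)
    (f : Ω → ℝ) (θ : ℝ) :
    (∑ x, P' x * f x - ∑ x, P x * f x) ^ 2 ≤
      (∑ x, (P' x - P x) ^ 2 / P x) * ∑ x, P x * (f x - θ) ^ 2 := by
  have key : (∑ x, P' x * f x - ∑ x, P x * f x)
      = ∑ x, ((P' x - P x) / Real.sqrt (P x)) * (Real.sqrt (P x) * (f x - θ)) := by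
    have : ∀ x : Ω, ((P' x - P x) / Real.sqrt (P x)) * (Real.sqrt (P x) * (f x - θ))
        = P' x * f x - P x * f x - θ * (P' x - P x) := by
      intro x
      have hs : Real.sqrt (P x) ≠ 0 := ne_of_gt (Real.sqrt_pos.mpr (hP x))
      field_simp
    rw [Finset.sum_congr rfl fun x _ => this x, Finset.sum_sub_distrib, Finset.sum_sub_distrib,
      ← Finset.mul_sum, Finset.sum_sub_distrib, hPs, hPs', sub_self, mul_zero, sub_zero]
  rw [key]
  calc (∑ x, ((P' x - P x) / Real.sqrt (P x)) * (Real.sqrt (P x) * (f x - θ))) ^ 2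
      ≤ (∑ x, ((P' x - P x) / Real.sqrt (P x)) ^ 2) * ∑ x, (Real.sqrt (P x) * (f x - θ)) ^ 2 :=
        Finset.sum_mul_sq_le_sq_mul_sq _ _ _
    _ = (∑ x, (P' x - P x) ^ 2 / P x) * ∑ x, P x * (f x - θ) ^ 2 := by
        have h1 : ∀ x : Ω, ((P' x - P x) / Real.sqrt (P x)) ^ 2 = (P' x - P x) ^ 2 / P x := by
          intro x; rw [div_pow, Real.sq_sqrt (hP x).le]
        have h2 : ∀ x : Ω, (Real.sqrt (P x) * (f x - θ)) ^ 2 = P x * (f x - θ) ^ 2 := by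
          intro x; rw [mul_pow, Real.sq_sqrt (hP x).le]
        rw [Finset.sum_congr rfl fun x _ => h1 x, Finset.sum_congr rfl fun x _ => h2 x]

/-- chi-square expansion. -/
lemma chisq_eq (P P' : Ω → ℝ) (hP : ∀ x, 0 < P x) (hPs : ∑ x, P x = 1) (hPs' : ∑ x, P' x = 1) :
    ∑ x, (P' x - P x) ^ 2 / P x = (∑ x, P' x ^ 2 / P x) - 1 := by
  have : ∀ x : Ω, (P' x - P x) ^ 2 / P x = P' x ^ 2 / P x - 2 * P' x + P x := by
    intro x
    have := (hP x).ne'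
    field_simp
    ring
  rw [Finset.sum_congr rfl fun x _ => this x]
  rw [Finset.sum_add_distrib, Finset.sum_sub_distrib, ← Finset.mul_sum, hPs, hPs']
  ring


end CS

section Chi



/-- single-letter chi-square: `∑ q'(u)²/q(u) = 1 + h²/(θ(1-θ))`. -/
lemma single_chisq (k : ℕ) (hk : 1 ≤ k) {θ h : ℝ} (h0 : 0 < θ) (h1 : θ < 1) :
    ∑ u, qf k (θ + h) u ^ 2 / qf k θ u = 1 + h ^ 2 / (θ * (1 - θ)) := by
  rw [Fin.sum_univ_succ]
  have hs : ∀ i : Fin k, qf k (θ + h) i.succ ^ 2 / qf k θ i.succ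
      = ((1 - (θ + h)) / k) ^ 2 / ((1 - θ) / k) := by
    intro i; simp [qf, Fin.succ_ne_zero]
  rw [Finset.sum_congr rfl fun i _ => hs i, Finset.sum_const]
  simp only [Finset.card_univ, Fintype.card_fin, nsmul_eq_mul, qf]
  have hk0 : (k : ℝ) ≠ 0 := Nat.cast_ne_zero.mpr (by omega)
  have hθ : θ ≠ 0 := ne_of_gt h0
  have h1θ : (1 : ℝ) - θ ≠ 0 := by intro hc; apply absurd h1; simp; linarith
  simp only [if_true, reduceIte]
  field_simp
  ring

/-- the product-measure chi-square. -/
lemma prod_chisq {k n : ℕ} (q q' : Fin (k + 1) → ℝ) (hq : ∀ u, 0 < q u) :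
    ∑ x : Fin n → Fin (k + 1), (∏ i, q' (x i)) ^ 2 / ∏ i, q (x i)
      = (∑ u, q' u ^ 2 / q u) ^ n := by
  rw [Fintype.sum_pow]
  apply Finset.sum_congr rfl
  intro x _
  rw [← Finset.prod_pow, ← Finset.prod_div_distrib]

/- Variance computation for the empirical estimator. -/
section var
variable {k : ℕ} (q : Fin (k + 1) → ℝ)

def gg : Fin (k + 1) → ℝ := fun u => (if u = 0 then (1 : ℝ) else 0) - q 0

lemma sum_q_gg (hq1 : ∑ u, q u = 1) : ∑ u, q u * gg q u = 0 := by
  simp only [gg, mul_sub]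
  rw [Finset.sum_sub_distrib]
  have h1 : ∑ u, q u * (if u = 0 then (1:ℝ) else 0) = q 0 := by
    rw [Finset.sum_congr rfl (fun u _ => by rw [mul_ite, mul_one, mul_zero])]
    simp
  rw [h1, ← Finset.sum_mul, hq1, one_mul, sub_self]

lemma sum_q_gg_sq (hq1 : ∑ u, q u = 1) :
    ∑ u, q u * gg q u ^ 2 = q 0 * (1 - q 0) := by
  have : ∀ u : Fin (k + 1), q u * gg q u ^ 2
      = q u * (if u = 0 then (1:ℝ) else 0) - 2 * q 0 * (q u * (if u = 0 then (1:ℝ) else 0))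
        + q 0 ^ 2 * q u := by
    intro u
    by_cases h : u = 0 <;> simp [gg, h] <;> ring
  rw [Finset.sum_congr rfl fun u _ => this u]
  have h1 : ∑ u, q u * (if u = 0 then (1:ℝ) else 0) = q 0 := by
    rw [Finset.sum_congr rfl (fun u _ => by rw [mul_ite, mul_one, mul_zero])]
    simp
  rw [Finset.sum_add_distrib, Finset.sum_sub_distrib, ← Finset.mul_sum, ← Finset.mul_sum, h1, hq1]
  ring

lemma comp_cons_apply {n : ℕ} (f : Fin (k + 1) → ℝ) (a : Fin (k + 1))
    (y : Fin n → Fin (k + 1)) (i : Fin (n + 1)) :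
    f ((Fin.cons a y : Fin (n+1) → Fin (k+1)) i)
      = (Fin.cons (f a) (fun j => f (y j)) : Fin (n+1) → ℝ) i := by
  induction i using Fin.cases <;> simp

lemma prod_comp_cons {n : ℕ} (f : Fin (k + 1) → ℝ) (a : Fin (k + 1))
    (y : Fin n → Fin (k + 1)) :
    ∏ i, f ((Fin.cons a y : Fin (n+1) → Fin (k+1)) i) = f a * ∏ i, f (y i) := by
  rw [Finset.prod_congr rfl fun i _ => comp_cons_apply f a y i, Fin.prod_cons]

lemma sum_comp_cons {n : ℕ} (f : Fin (k + 1) → ℝ) (a : Fin (k + 1))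
    (y : Fin n → Fin (k + 1)) :
    ∑ i, f ((Fin.cons a y : Fin (n+1) → Fin (k+1)) i) = f a + ∑ i, f (y i) := by
  rw [Finset.sum_congr rfl fun i _ => comp_cons_apply f a y i, Fin.sum_cons]

lemma sum_cons_decompose {n : ℕ} (F : (Fin (n + 1) → Fin (k + 1)) → ℝ) :
    ∑ x : Fin (n + 1) → Fin (k + 1), F x
      = ∑ a : Fin (k + 1), ∑ y : Fin n → Fin (k + 1), F (Fin.cons a y) := by
  rw [← (Fin.consEquiv (fun _ : Fin (n + 1) => Fin (k + 1))).sum_comp F,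
    Fintype.sum_prod_type]
  rfl

/-- mean of sum of `gg` is zero. -/
lemma mean_sum_gg (hq1 : ∑ u, q u = 1) (n : ℕ) :
    ∑ x : Fin n → Fin (k + 1), (∏ i, q (x i)) * (∑ i, gg q (x i)) = 0 := by
  induction n with
  | zero => simp
  | succ n ih =>
    rw [sum_cons_decompose (fun x => (∏ i, q (x i)) * (∑ i, gg q (x i)))]
    have step : ∀ a : Fin (k+1), ∀ y : Fin n → Fin (k+1),
        (∏ i, q ((Fin.cons a y : Fin (n+1) → Fin (k+1)) i))
            * (∑ i, gg q ((Fin.cons a y : Fin (n+1) → Fin (k+1)) i))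
        = q a * gg q a * (∏ i, q (y i))
            + q a * ((∏ i, q (y i)) * (∑ i, gg q (y i))) := by
      intro a y
      rw [prod_comp_cons, sum_comp_cons]; ring
    rw [Finset.sum_congr rfl fun a _ => Finset.sum_congr rfl fun y _ => step a y]
    simp only [Finset.sum_add_distrib, ← Finset.mul_sum]
    rw [← Finset.sum_mul]
    have hP1 : ∑ y : Fin n → Fin (k+1), ∏ i, q (y i) = 1 := by
      rw [← Fintype.sum_pow, hq1, one_pow]
    rw [hP1, ih, sum_q_gg q hq1]
    simp

/-- second moment of sum of `gg`. -/
lemma var_sum_gg (hq1 : ∑ u, q u = 1) (n : ℕ) :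
    ∑ x : Fin n → Fin (k + 1), (∏ i, q (x i)) * (∑ i, gg q (x i)) ^ 2
      = n * (q 0 * (1 - q 0)) := by
  induction n with
  | zero => simp
  | succ n ih =>
    rw [sum_cons_decompose (fun x => (∏ i, q (x i)) * (∑ i, gg q (x i)) ^ 2)]
    have step : ∀ a : Fin (k+1), ∀ y : Fin n → Fin (k+1),
        (∏ i, q ((Fin.cons a y : Fin (n+1) → Fin (k+1)) i))
            * (∑ i, gg q ((Fin.cons a y : Fin (n+1) → Fin (k+1)) i)) ^ 2
        = q a * gg q a ^ 2 * (∏ i, q (y i))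
            + 2 * (q a * gg q a) * ((∏ i, q (y i)) * (∑ i, gg q (y i)))
            + q a * ((∏ i, q (y i)) * (∑ i, gg q (y i)) ^ 2) := by
      intro a y
      rw [prod_comp_cons, sum_comp_cons]; ring
    rw [Finset.sum_congr rfl fun a _ => Finset.sum_congr rfl fun y _ => step a y]
    simp only [Finset.sum_add_distrib, ← Finset.mul_sum]
    have hP1 : ∑ y : Fin n → Fin (k+1), ∏ i, q (y i) = 1 := by
      rw [← Fintype.sum_pow, hq1, one_pow]
    rw [hP1, mean_sum_gg q hq1, ih]
    simp only [mul_zero, Finset.sum_const_zero, mul_one, add_zero, zero_add]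
    rw [sum_q_gg_sq q hq1, ← Finset.sum_mul, hq1, one_mul]
    push_cast
    ring

end var

end Chi

section Upper

variable {k n : ℕ}

/-- the empirical-frequency estimator. -/
def phatE (k n : ℕ) : (Fin n → Fin (k + 1)) → ℝ :=
  fun x => (∑ i, if x i = 0 then (1 : ℝ) else 0) / n

lemma phatE_mem (x : Fin n → Fin (k + 1)) : phatE k n x ∈ Set.Icc (0 : ℝ) 1 := by
  rcases Nat.eq_zero_or_pos n with hn | hn
  · subst hn; simp [phatE]
  have hn0 : (0:ℝ) < n := by positivity
  constructor
  · apply div_nonneg _ hn0.le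
    apply Finset.sum_nonneg; intro i _; positivity
  · rw [phatE, div_le_one hn0]
    calc (∑ i, if x i = 0 then (1:ℝ) else 0) ≤ ∑ _i : Fin n, (1:ℝ) := by
          apply Finset.sum_le_sum; intro i _
          by_cases h : x i = 0 <;> simp [h]
      _ = n := by simp
    
lemma risk_empirical (hn : 1 ≤ n) (q : Fin (k + 1) → ℝ) (hq1 : ∑ u, q u = 1) :
    ∑ x : Fin n → Fin (k + 1), (∏ i, q (x i)) * (q 0 - phatE k n x) ^ 2
      = q 0 * (1 - q 0) / n := by
  have hn0 : (n:ℝ) ≠ 0 := by positivity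
  have key : ∀ x : Fin n → Fin (k + 1),
      (q 0 - phatE k n x) ^ 2 = (1 / (n:ℝ)) ^ 2 * (∑ i, gg q (x i)) ^ 2 := by
    intro x
    have hgg : ∑ i, gg q (x i) = (∑ i, if x i = 0 then (1:ℝ) else 0) - n * q 0 := by
      simp only [gg, Finset.sum_sub_distrib, Finset.sum_const, Finset.card_univ,
        Fintype.card_fin, nsmul_eq_mul]
    rw [hgg, phatE]
    field_simp
    ring
  rw [Finset.sum_congr rfl fun x _ => by rw [key x]]
  have : ∀ x : Fin n → Fin (k + 1),
      (∏ i, q (x i)) * ((1 / (n:ℝ)) ^ 2 * (∑ i, gg q (x i)) ^ 2)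
        = (1 / (n:ℝ)) ^ 2 * ((∏ i, q (x i)) * (∑ i, gg q (x i)) ^ 2) := by
    intro x; ring
  rw [Finset.sum_congr rfl fun x _ => this x, ← Finset.mul_sum, var_sum_gg q hq1]
  field_simp

lemma memPc_q0_le_one {q : Fin (k + 1) → ℝ} (hq : MemPc k q) : q 0 ≤ 1 := by
  rw [← hq.2.1]
  exact Finset.single_le_sum (fun i _ => hq.1 i) (Finset.mem_univ 0)

/-- the set of risks for a given estimator. -/
def Sset (k n : ℕ) (phat : (Fin n → Fin (k + 1)) → ℝ) : Set ℝ :=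
  {s : ℝ | ∃ q : Fin (k + 1) → ℝ, MemPc k q ∧
      s = ∑ x : Fin n → Fin (k + 1), (∏ i, q (x i)) * (q 0 - phat x) ^ 2}

lemma Sset_le_one {phat : (Fin n → Fin (k + 1)) → ℝ}
    (hphat : ∀ x, phat x ∈ Set.Icc (0 : ℝ) 1) :
    ∀ s ∈ Sset k n phat, s ≤ 1 := by
  rintro s ⟨q, hq, rfl⟩
  calc ∑ x : Fin n → Fin (k + 1), (∏ i, q (x i)) * (q 0 - phat x) ^ 2
      ≤ ∑ x : Fin n → Fin (k + 1), (∏ i, q (x i)) * 1 := by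
        apply Finset.sum_le_sum
        intro x _
        apply mul_le_mul_of_nonneg_left _ (P_nonneg hq.1 x)
        have h1 := (hphat x).1
        have h2 := (hphat x).2
        have h3 := hq.2.2.1
        have h4 := memPc_q0_le_one hq
        nlinarith
    _ = 1 := by
        rw [Finset.sum_congr rfl fun x _ => mul_one _, sum_P hq.2.1]

lemma Sset_bddAbove {phat : (Fin n → Fin (k + 1)) → ℝ}
    (hphat : ∀ x, phat x ∈ Set.Icc (0 : ℝ) 1) : BddAbove (Sset k n phat) :=
  ⟨1, fun s hs => Sset_le_one hphat s hs⟩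

lemma risk_mem_Sset (phat : (Fin n → Fin (k + 1)) → ℝ) {q : Fin (k + 1) → ℝ}
    (hq : MemPc k q) :
    (∑ x : Fin n → Fin (k + 1), (∏ i, q (x i)) * (q 0 - phat x) ^ 2) ∈ Sset k n phat :=
  ⟨q, hq, rfl⟩

lemma risk_nonneg (phat : (Fin n → Fin (k + 1)) → ℝ) {q : Fin (k + 1) → ℝ}
    (hq : MemPc k q) :
    0 ≤ ∑ x : Fin n → Fin (k + 1), (∏ i, q (x i)) * (q 0 - phat x) ^ 2 :=
  Finset.sum_nonneg fun x _ => mul_nonneg (P_nonneg hq.1 x) (sq_nonneg _)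

lemma half_memPc (hk : 1 ≤ k) : MemPc k (qf k (1/2)) :=
  qf_memPc k hk le_rfl (by norm_num)

lemma sSup_Sset_nonneg (hk : 1 ≤ k) {phat : (Fin n → Fin (k + 1)) → ℝ}
    (hphat : ∀ x, phat x ∈ Set.Icc (0 : ℝ) 1) : 0 ≤ sSup (Sset k n phat) :=
  le_trans (risk_nonneg phat (half_memPc hk))
    (le_csSup (Sset_bddAbove hphat) (risk_mem_Sset phat (half_memPc hk)))

/-- the outer set in the definition of `minimaxPc`. -/
lemma minimax_eq : minimaxPc k n = sInf {r : ℝ | ∃ phat : (Fin n → Fin (k + 1)) → ℝ,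
    (∀ x, phat x ∈ Set.Icc (0 : ℝ) 1) ∧ r = sSup (Sset k n phat)} := rfl

lemma outer_bddBelow (hk : 1 ≤ k) : BddBelow {r : ℝ | ∃ phat : (Fin n → Fin (k + 1)) → ℝ,
    (∀ x, phat x ∈ Set.Icc (0 : ℝ) 1) ∧ r = sSup (Sset k n phat)} := by
  refine ⟨0, ?_⟩
  rintro r ⟨phat, hphat, rfl⟩
  exact sSup_Sset_nonneg hk hphat

lemma outer_nonempty : Set.Nonempty {r : ℝ | ∃ phat : (Fin n → Fin (k + 1)) → ℝ,
    (∀ x, phat x ∈ Set.Icc (0 : ℝ) 1) ∧ r = sSup (Sset k n phat)} :=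
  ⟨_, ⟨fun _ => 1/2, fun _ => by norm_num, rfl⟩⟩

lemma minimax_le (hk : 1 ≤ k) (hn : 1 ≤ n) : minimaxPc k n ≤ 1 / (4 * n) := by
  rw [minimax_eq]
  have hmem : sSup (Sset k n (phatE k n)) ∈ {r : ℝ | ∃ phat : (Fin n → Fin (k + 1)) → ℝ,
      (∀ x, phat x ∈ Set.Icc (0 : ℝ) 1) ∧ r = sSup (Sset k n phat)} :=
    ⟨phatE k n, fun x => phatE_mem x, rfl⟩
  refine le_trans (csInf_le (outer_bddBelow hk) hmem) ?_
  apply csSup_le ⟨_, risk_mem_Sset (phatE k n) (half_memPc hk)⟩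
  rintro s ⟨q, hq, rfl⟩
  rw [risk_empirical hn q hq.2.1]
  have hn0 : (0:ℝ) < n := by positivity
  rw [div_le_div_iff₀ hn0 (by positivity)]
  have := hq.2.2.1
  have := memPc_q0_le_one hq
  nlinarith [mul_nonneg (sq_nonneg (2 * q 0 - 1)) hn0.le]

end Upper

section Lower

variable {k : ℕ}

lemma exp_sub_one_le {a : ℝ} (ha1 : a < 1) :
    Real.exp a - 1 ≤ a / (1 - a) := by
  have h1 : 1 - a ≤ Real.exp (-a) := by
    have := Real.add_one_le_exp (-a); linarith
  have h3 : 0 < 1 - a := by linarith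
  have h2 : Real.exp a * (1 - a) ≤ 1 := by
    calc Real.exp a * (1 - a) ≤ Real.exp a * Real.exp (-a) :=
          mul_le_mul_of_nonneg_left h1 (Real.exp_pos a).le
      _ = 1 := by rw [← Real.exp_add]; simp
  have h4 : Real.exp a ≤ 1 / (1 - a) := by
    rw [le_div_iff₀ h3]; exact h2
  have h5 : 1 / (1 - a) - 1 = a / (1 - a) := by field_simp; ring
  linarith

lemma pow_le_exp {c : ℝ} (hc : 0 ≤ c) (n : ℕ) : (1 + c) ^ n ≤ Real.exp (n * c) := by
  rw [Real.exp_nat_mul]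
  apply pow_le_pow_left₀ (by linarith)
  linarith [Real.add_one_le_exp c]

lemma theta_lt_one {θ t : ℝ} (ht : t ≤ 1/10) (hθ2 : θ ≤ 1/2 + t) : θ < 1 := by linarith

/-- chi-square bound for one grid step. -/
lemma chisq_bound (hk : 1 ≤ k) {θ h t : ℝ} {n : ℕ} (hθ1 : 1/2 ≤ θ) (hθ2 : θ ≤ 1/2 + t)
    (ht0 : 0 < t) (ht : t ≤ 1/10) (hh0 : 0 < h) (hnh2 : (n:ℝ) * h^2 = t^2) :
    ∑ x : Fin n → Fin (k+1),
        ((∏ i, qf k (θ + h) (x i)) - ∏ i, qf k θ (x i)) ^ 2 / ∏ i, qf k θ (x i)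
      ≤ (t^2/(1/4 - t^2)) / (1 - t^2/(1/4 - t^2)) := by
  have hθpos : 0 < θ := by linarith
  have hθlt : θ < 1 := theta_lt_one ht hθ2
  have hqpos : ∀ u, 0 < qf k θ u := qf_pos k hk hθ1 hθlt
  have hPpos : ∀ x : Fin n → Fin (k+1), 0 < ∏ i, qf k θ (x i) := P_pos hqpos
  have hPs : ∑ x : Fin n → Fin (k+1), ∏ i, qf k θ (x i) = 1 := sum_P (sum_qf k hk θ)
  have hPs' : ∑ x : Fin n → Fin (k+1), ∏ i, qf k (θ + h) (x i) = 1 :=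
    sum_P (sum_qf k hk (θ + h))
  rw [chisq_eq _ _ hPpos hPs hPs', prod_chisq _ _ hqpos,
    single_chisq k hk hθpos hθlt]
  -- numeric bounds
  have ht2 : t^2 ≤ 1/100 := by nlinarith
  have hden : 1/4 - t^2 ≤ θ * (1 - θ) := by nlinarith [mul_nonneg (by linarith : (0:ℝ) ≤ θ - 1/2) (by linarith : (0:ℝ) ≤ 1/2 + t - θ)]
  have hdenpos : (0:ℝ) < 1/4 - t^2 := by linarith
  have hθθpos : (0:ℝ) < θ * (1 - θ) := by nlinarith
  set a : ℝ := t^2/(1/4 - t^2) with ha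
  have ha0 : 0 ≤ a := by positivity
  have ha1 : a < 1 := by
    rw [ha, div_lt_one hdenpos]; nlinarith
  have hc0 : 0 ≤ h^2 / (θ * (1 - θ)) := by positivity
  have step1 : (1 + h^2 / (θ * (1 - θ))) ^ n ≤ Real.exp (n * (h^2 / (θ * (1 - θ)))) :=
    pow_le_exp hc0 n
  have step2 : (n:ℝ) * (h^2 / (θ * (1 - θ))) ≤ a := by
    rw [ha, mul_div_assoc' _ _ _, hnh2]
    exact div_le_div_of_nonneg_left (by positivity) hdenpos hden
  calc (1 + h ^ 2 / (θ * (1 - θ))) ^ n - 1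
      ≤ Real.exp ((n:ℝ) * (h^2 / (θ * (1 - θ)))) - 1 := by linarith
    _ ≤ Real.exp a - 1 := by
        have := Real.exp_le_exp.mpr step2; linarith
    _ ≤ a / (1 - a) := exp_sub_one_le ha1

/-- Main lower bound for a fixed estimator. -/
lemma phat_bound (hk : 1 ≤ k) {t : ℝ} (ht0 : 0 < t) (ht : t ≤ 1/10) {n m : ℕ}
    (hm : 1 ≤ m) (hn : 1 ≤ n) (hmt : 1/t^2 ≤ (m:ℝ)) (hnm : (m:ℝ)^2 ≤ (n:ℝ))
    (phat : (Fin n → Fin (k + 1)) → ℝ) (hphat : ∀ x, phat x ∈ Set.Icc (0 : ℝ) 1) :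
    (1 - t)^2 * (1 - 8*t^2) / 4 ≤ (n:ℝ) * sSup (Sset k n phat) := by
  have hn0 : (0:ℝ) < (n:ℝ) := by positivity
  set sn : ℝ := Real.sqrt n with hsn
  have hsn0 : 0 < sn := Real.sqrt_pos.mpr hn0
  have hsn2 : sn^2 = (n:ℝ) := Real.sq_sqrt hn0.le
  have hmsn : (m:ℝ) ≤ sn := by
    have := Real.sqrt_le_sqrt hnm
    rwa [Real.sqrt_sq (by positivity)] at this
  set h : ℝ := t / sn with hh
  have hh0 : 0 < h := by positivity
  have hnh2 : (n:ℝ) * h^2 = t^2 := by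
    rw [hh, div_pow, ← hsn2]; field_simp
  have hmh : (m:ℝ) * h ≤ t := by
    rw [hh]
    calc (m:ℝ) * (t / sn) ≤ sn * (t / sn) := by
          apply mul_le_mul_of_nonneg_right hmsn (by positivity)
      _ = t := by field_simp
  -- the grid
  set θ : ℕ → ℝ := fun j => 1/2 + j * h with hθdef
  have hθ1 : ∀ j : ℕ, j ≤ m → 1/2 ≤ θ j := by
    intro j hj; simp only [hθdef]
    have : 0 ≤ (j:ℝ) * h := by positivity
    linarith
  have hθ2 : ∀ j : ℕ, j ≤ m → θ j ≤ 1/2 + t := by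
    intro j hj
    have : (j:ℝ) * h ≤ (m:ℝ) * h :=
      mul_le_mul_of_nonneg_right (Nat.cast_le.mpr hj) hh0.le
    simp only [hθdef]; linarith
  have hθstep : ∀ j : ℕ, θ (j + 1) = θ j + h := by
    intro j; simp only [hθdef]; push_cast; ring
  have hθmem : ∀ j : ℕ, j ≤ m → MemPc k (qf k (θ j)) := by
    intro j hj
    exact qf_memPc k hk (hθ1 j hj) (le_of_lt (theta_lt_one ht (hθ2 j hj)))
  set R : ℝ := sSup (Sset k n phat) with hR
  have hbdd : BddAbove (Sset k n phat) := Sset_bddAbove hphat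
  -- risks on the grid
  have hrisk_le : ∀ j : ℕ, j ≤ m →
      ∑ x : Fin n → Fin (k+1), (∏ i, qf k (θ j) (x i)) * (θ j - phat x) ^ 2 ≤ R := by
    intro j hj
    apply le_csSup hbdd
    refine ⟨qf k (θ j), hθmem j hj, ?_⟩
    rw [qf_zero]
  have hR0 : 0 ≤ R :=
    le_trans (risk_nonneg phat (half_memPc hk))
      (le_csSup hbdd (risk_mem_Sset phat (half_memPc hk)))
  -- case split
  by_cases hcase : 1/4 ≤ (n:ℝ) * R
  · have hB : (1 - t)^2 * (1 - 8*t^2) / 4 ≤ 1/4 := by nlinarith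
    linarith
  push_neg at hcase
  have hRle : R ≤ 1/(4*(n:ℝ)) := by
    rw [le_div_iff₀ (by positivity : (0:ℝ) < 4*(n:ℝ))]
    nlinarith
  set sqR : ℝ := Real.sqrt R with hsqR
  have hsqR0 : 0 ≤ sqR := Real.sqrt_nonneg R
  have hsqRle : sqR ≤ 1/(2*sn) := by
    have h1 : Real.sqrt (1/(4*(n:ℝ))) = 1/(2*sn) := by
      rw [show (1/(4*(n:ℝ))) = (1/(2*sn))^2 by rw [div_pow]; rw [mul_pow]; rw [hsn2]; norm_num]
      exact Real.sqrt_sq (by positivity)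
    rw [hsqR, ← h1]
    exact Real.sqrt_le_sqrt hRle
  -- the means
  set f : ℕ → ℝ := fun j => ∑ x : Fin n → Fin (k+1), (∏ i, qf k (θ j) (x i)) * phat x
    with hfdef
  have hbias : ∀ j : ℕ, j ≤ m → |f j - θ j| ≤ sqR := by
    intro j hj
    have hqmem := hθmem j hj
    have hj1 := jensen (fun x : Fin n → Fin (k+1) => ∏ i, qf k (θ j) (x i))
      (P_nonneg hqmem.1) (sum_P hqmem.2.1) phat (θ j)
    have hflip : ∑ x : Fin n → Fin (k+1), (∏ i, qf k (θ j) (x i)) * (phat x - θ j) ^ 2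
        = ∑ x : Fin n → Fin (k+1), (∏ i, qf k (θ j) (x i)) * (θ j - phat x) ^ 2 :=
      Finset.sum_congr rfl fun x _ => by ring
    have h2 : (f j - θ j)^2 ≤ R := by
      rw [hfdef]
      calc (∑ x : Fin n → Fin (k+1), (∏ i, qf k (θ j) (x i)) * phat x - θ j)^2
          ≤ ∑ x : Fin n → Fin (k+1), (∏ i, qf k (θ j) (x i)) * (phat x - θ j) ^ 2 := hj1
        _ ≤ R := by rw [hflip]; exact hrisk_le j hj
    calc |f j - θ j| = Real.sqrt ((f j - θ j)^2) := (Real.sqrt_sq_eq_abs _).symm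
      _ ≤ sqR := Real.sqrt_le_sqrt h2
  -- telescoping and pigeonhole
  have htel : ∑ j ∈ Finset.range m, (f (j+1) - f j) = f m - f 0 :=
    Finset.sum_range_sub f m
  have hlowtel : (m:ℝ) * h - 2 * sqR ≤ f m - f 0 := by
    have h0 := hbias 0 (by omega)
    have hm' := hbias m le_rfl
    have e0 : θ 0 = 1/2 := by simp [hθdef]
    have em : θ m = 1/2 + m * h := by simp [hθdef]
    rw [abs_le] at h0 hm'
    have := h0.2; have := hm'.1
    rw [e0] at h0; rw [em] at hm'
    linarith [h0.1, h0.2, hm'.1, hm'.2]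
  obtain ⟨j, hjm, hgap⟩ : ∃ j ∈ Finset.range m, ((m:ℝ) * h - 2 * sqR)/m ≤ f (j+1) - f j := by
    by_contra hcon
    push_neg at hcon
    have hlt : ∑ j ∈ Finset.range m, (f (j+1) - f j)
        < ∑ _j ∈ Finset.range m, ((m:ℝ) * h - 2 * sqR)/m :=
      Finset.sum_lt_sum_of_nonempty (by simp; omega) fun j hj => hcon j hj
    rw [htel, Finset.sum_const, Finset.card_range, nsmul_eq_mul] at hlt
    have hm0 : (0:ℝ) < (m:ℝ) := by positivity
    rw [mul_div_cancel₀ _ (ne_of_gt hm0)] at hlt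
    linarith
  rw [Finset.mem_range] at hjm
  -- gap lower bound
  have hm0 : (0:ℝ) < (m:ℝ) := by positivity
  have hgap2 : h * (1 - t) ≤ f (j+1) - f j := by
    have h1 : 2 * sqR / m ≤ 1/(sn * m) := by
      rw [div_le_div_iff₀ hm0 (by positivity)]
      calc 2 * sqR * (sn * m) ≤ 2 * (1/(2*sn)) * (sn * m) := by
            apply mul_le_mul_of_nonneg_right _ (by positivity)
            linarith
        _ = 1 * m := by field_simp
    have h2 : 1/(sn * m) ≤ h * t := by
      rw [div_le_iff₀ (by positivity), hh]
      have : t / sn * t * (sn * m) = t^2 * m := by field_simp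
      rw [this]
      calc (1:ℝ) = t^2 * (1/t^2) := by field_simp
        _ ≤ t^2 * m := by
            apply mul_le_mul_of_nonneg_left hmt (by positivity)
    have h3 : ((m:ℝ) * h - 2 * sqR)/m = h - 2 * sqR / m := by
      field_simp
    rw [h3] at hgap
    nlinarith
  -- Chapman–Robbins
  have hqmemj := hθmem j (by omega)
  have hqposj : ∀ u, 0 < qf k (θ j) u :=
    qf_pos k hk (hθ1 j (by omega)) (theta_lt_one ht (hθ2 j (by omega)))
  have hchap := chapman (fun x : Fin n → Fin (k+1) => ∏ i, qf k (θ j) (x i))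
    (fun x : Fin n → Fin (k+1) => ∏ i, qf k (θ (j+1)) (x i))
    (P_pos hqposj) (sum_P hqmemj.2.1) (sum_P (hθmem (j+1) (by omega)).2.1) phat (θ j)
  have hchi : ∑ x : Fin n → Fin (k+1),
      ((∏ i, qf k (θ (j+1)) (x i)) - ∏ i, qf k (θ j) (x i)) ^ 2 / ∏ i, qf k (θ j) (x i)
      ≤ (t^2/(1/4 - t^2)) / (1 - t^2/(1/4 - t^2)) := by
    rw [show θ (j+1) = θ j + h from hθstep j]
    exact chisq_bound hk (hθ1 j (by omega)) (hθ2 j (by omega)) ht0 ht hh0 hnh2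
  have hchi0 : 0 ≤ ∑ x : Fin n → Fin (k+1),
      ((∏ i, qf k (θ (j+1)) (x i)) - ∏ i, qf k (θ j) (x i)) ^ 2 / ∏ i, qf k (θ j) (x i) :=
    Finset.sum_nonneg fun x _ => div_nonneg (sq_nonneg _) (P_pos hqposj x).le
  -- put it together
  set A : ℝ := (t^2/(1/4 - t^2)) / (1 - t^2/(1/4 - t^2)) with hA
  have ht2 : t^2 ≤ 1/100 := by nlinarith
  have hd1 : (0:ℝ) < 1/4 - t^2 := by linarith
  have hapos : (0:ℝ) < t^2/(1/4 - t^2) := by positivity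
  have halt1 : t^2/(1/4 - t^2) < 1 := by
    rw [div_lt_one hd1]; nlinarith
  have hA0 : 0 < A := div_pos hapos (by linarith)
  have hgap20 : 0 ≤ h * (1 - t) := by nlinarith
  have hgapsq : (h * (1 - t))^2 ≤ (f (j+1) - f j)^2 :=
    pow_le_pow_left₀ hgap20 hgap2 2
  have hrj : ∑ x : Fin n → Fin (k+1), (∏ i, qf k (θ j) (x i)) * (phat x - θ j) ^ 2 ≤ R := by
    have hflip : ∑ x : Fin n → Fin (k+1), (∏ i, qf k (θ j) (x i)) * (phat x - θ j) ^ 2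
        = ∑ x : Fin n → Fin (k+1), (∏ i, qf k (θ j) (x i)) * (θ j - phat x) ^ 2 :=
      Finset.sum_congr rfl fun x _ => by ring
    rw [hflip]; exact hrisk_le j (by omega)
  have chain : (h * (1 - t))^2 ≤ A * R := by
    calc (h * (1 - t))^2 ≤ (f (j+1) - f j)^2 := hgapsq
      _ ≤ (∑ x : Fin n → Fin (k+1),
            ((∏ i, qf k (θ (j+1)) (x i)) - ∏ i, qf k (θ j) (x i)) ^ 2 / ∏ i, qf k (θ j) (x i))
            * ∑ x : Fin n → Fin (k+1), (∏ i, qf k (θ j) (x i)) * (phat x - θ j) ^ 2 := hchap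
      _ ≤ (∑ x : Fin n → Fin (k+1),
            ((∏ i, qf k (θ (j+1)) (x i)) - ∏ i, qf k (θ j) (x i)) ^ 2 / ∏ i, qf k (θ j) (x i))
            * R := mul_le_mul_of_nonneg_left hrj hchi0
      _ ≤ A * R := mul_le_mul_of_nonneg_right hchi hR0
  have hfinal : t^2 * (1 - t)^2 ≤ A * ((n:ℝ) * R) := by
    have h1 : (n:ℝ) * (h * (1 - t))^2 ≤ (n:ℝ) * (A * R) :=
      mul_le_mul_of_nonneg_left chain hn0.le
    have h2 : (n:ℝ) * (h * (1 - t))^2 = t^2 * (1 - t)^2 := by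
      rw [mul_pow, ← mul_assoc, hnh2]
    rw [h2] at h1
    linarith [h1]
  have hABeq : A * ((1 - t)^2 * (1 - 8*t^2)/4) = t^2 * (1 - t)^2 := by
    rw [hA]
    have hd1' : ((1:ℝ)/4 - t^2) ≠ 0 := ne_of_gt hd1
    have hd2 : ((1:ℝ)/4 - 2*t^2) ≠ 0 := by intro hc; nlinarith
    have h2' : (1:ℝ) - t^2/(1/4 - t^2) = (1/4 - 2*t^2)/(1/4 - t^2) := by
      rw [eq_div_iff hd1', sub_mul, div_mul_cancel₀ _ hd1']; ring
    rw [h2', div_div_div_cancel_right₀, div_mul_eq_mul_div, div_eq_iff hd2]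
    · ring
    · exact hd1'
  have hlast : A * ((1 - t)^2 * (1 - 8*t^2)/4) ≤ A * ((n:ℝ) * R) := by
    rw [hABeq]; exact hfinal
  exact le_of_mul_le_mul_left hlast hA0

lemma eventual_bound (hk : 1 ≤ k) {t : ℝ} (ht0 : 0 < t) (ht : t ≤ 1/10) :
    ∀ᶠ n : ℕ in Filter.atTop, (1 - t)^2 * (1 - 8*t^2)/4 ≤ (n:ℝ) * minimaxPc k n := by
  set m := ⌈1/t^2⌉₊ with hmdef
  have hm : 1 ≤ m := Nat.one_le_iff_ne_zero.mpr (by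
    intro hc
    have := Nat.ceil_pos.mpr (show (0:ℝ) < 1/t^2 by positivity)
    omega)
  filter_upwards [Filter.eventually_ge_atTop (max 1 (m^2))] with n hn
  have hn1 : 1 ≤ n := le_trans (le_max_left _ _) hn
  have hnm : m^2 ≤ n := le_trans (le_max_right _ _) hn
  have hmt : 1/t^2 ≤ (m:ℝ) := Nat.le_ceil _
  have hnmr : (m:ℝ)^2 ≤ (n:ℝ) := by exact_mod_cast hnm
  have hn0 : (0:ℝ) < (n:ℝ) := by positivity
  have key : (1 - t)^2 * (1 - 8*t^2)/4 / (n:ℝ) ≤ minimaxPc k n := by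
    rw [minimax_eq]
    apply le_csInf outer_nonempty
    rintro r ⟨phat, hphat, rfl⟩
    have hb := phat_bound hk ht0 ht hm hn1 hmt hnmr phat hphat
    rw [div_le_iff₀ hn0]
    linarith
  calc (1 - t)^2 * (1 - 8*t^2)/4 = (n:ℝ) * ((1 - t)^2 * (1 - 8*t^2)/4 / (n:ℝ)) := by
        field_simp
    _ ≤ (n:ℝ) * minimaxPc k n := mul_le_mul_of_nonneg_left key hn0.le

end Lower

end MinimaxAux

/-- **Lemma 8:** for every `k ≥ 1`, the minimax squared-error risk for estimating
`p_c(0)` from `n` i.i.d. samples of a pmf in `𝒫_c` satisfies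
`liminf_{n→∞} n · inf_{p̂} sup_{p_c ∈ 𝒫_c} E[(p_c(0) - p̂(X^n))²] ≥ 1/4`. -/
theorem minimax_Pc_liminf_ge (k : ℕ) (hk : 1 ≤ k) :
    1 / 4 ≤ Filter.liminf (fun n : ℕ => (n : ℝ) * minimaxPc k n) Filter.atTop := by
  have hco : Filter.IsCoboundedUnder (· ≥ ·) Filter.atTop
      (fun n : ℕ => (n : ℝ) * minimaxPc k n) := by
    apply Filter.isCoboundedUnder_ge_of_eventually_le (x := 1/4) Filter.atTop
    filter_upwards [Filter.eventually_ge_atTop 1] with n hn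
    have hn0 : (0:ℝ) < (n:ℝ) := by positivity
    have h1 := MinimaxAux.minimax_le hk hn
    calc (n:ℝ) * minimaxPc k n ≤ (n:ℝ) * (1/(4*(n:ℝ))) :=
          mul_le_mul_of_nonneg_left h1 hn0.le
      _ = 1/4 := by field_simp
  have hmain : ∀ ε : ℝ, 0 < ε →
      1/4 ≤ Filter.liminf (fun n : ℕ => (n : ℝ) * minimaxPc k n) Filter.atTop + ε := by
    intro ε hε
    set t : ℝ := min (1/10) ε with htdef
    have ht0 : 0 < t := lt_min (by norm_num) hε
    have ht : t ≤ 1/10 := min_le_left _ _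
    have htε : t ≤ ε := min_le_right _ _
    have hB : 1/4 - t ≤ (1 - t)^2 * (1 - 8*t^2)/4 := by
      have h1 : t^2 ≤ t/10 := by nlinarith
      have h2 : t^3 ≤ t/100 := by nlinarith
      have h3 : t^4 ≤ t/1000 := by nlinarith
      nlinarith [h1, h2, h3]
    have hlim : (1 - t)^2 * (1 - 8*t^2)/4
        ≤ Filter.liminf (fun n : ℕ => (n : ℝ) * minimaxPc k n) Filter.atTop :=
      Filter.le_liminf_of_le hco (MinimaxAux.eventual_bound hk ht0 ht)
    linarith
  exact le_of_forall_pos_le_add hmain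
end
end
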